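/- arXiv:1705.01363 — 4 statements merged into one kernel-verified Lean document; each statement's English description precedes it below -/
import Mathlib

section
/- Define the modified unitary Ramanujan sums c̃_q(n) = Σ_{d ∥ (n,q)_{**}} d · μ*(q/d). Then for all q, n ≥ 1, Σ_{d ∥ q} c̃_d(n) equals q if q ∥ n, and 0 if q is not a unitary divisor of n. -/
def uDivisors (n : ℕ) : Finset ℕ := n.divisors.filter (fun d => Nat.gcd d (n / d) = 1)

def mustar (n : ℕ) : ℤ := (-1) ^ n.primeFactors.card

def gcud (n q : ℕ) : ℕ := (uDivisors n ∩ uDivisors q).sup id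

/-- The modified unitary Ramanujan sum c̃_q(n). -/
def ctilde (q n : ℕ) : ℤ := ∑ d ∈ uDivisors (gcud n q), (d : ℤ) * mustar (q / d)

open Finset

lemma mem_uDivisors {d n : ℕ} :
    d ∈ uDivisors n ↔ (d ∣ n ∧ Nat.gcd d (n / d) = 1) ∧ n ≠ 0 := by
  simp only [uDivisors, Finset.mem_filter, Nat.mem_divisors]
  tauto

lemma ne_zero_of_mem_uDivisors {d n : ℕ} (h : d ∈ uDivisors n) : d ≠ 0 := by
  rcases mem_uDivisors.1 h with ⟨⟨h1, _⟩, h2⟩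
  rintro rfl
  exact h2 (Nat.eq_zero_of_zero_dvd h1)

lemma one_mem_uDivisors {n : ℕ} (hn : n ≠ 0) : 1 ∈ uDivisors n :=
  mem_uDivisors.2 ⟨⟨one_dvd n, Nat.gcd_one_left _⟩, hn⟩

lemma self_mem_uDivisors {n : ℕ} (hn : n ≠ 0) : n ∈ uDivisors n := by
  refine mem_uDivisors.2 ⟨⟨dvd_rfl, ?_⟩, hn⟩
  rw [Nat.div_self (Nat.pos_of_ne_zero hn), Nat.gcd_one_right]

lemma aux_div {e d n : ℕ} (he0 : 0 < e) (hed : e ∣ d) (hdn : d ∣ n) :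
    n / e = (d / e) * (n / d) := by
  rcases Nat.eq_zero_or_pos d with rfl | hd0
  · obtain rfl : n = 0 := Nat.eq_zero_of_zero_dvd hdn
    simp
  rcases hed with ⟨a, rfl⟩
  rcases hdn with ⟨b, rfl⟩
  rw [Nat.mul_div_cancel_left a he0, Nat.mul_div_cancel_left b hd0, mul_assoc,
    Nat.mul_div_cancel_left _ he0]

/-- Transitivity of unitary divisibility. -/
lemma uD_trans {e d n : ℕ} (he : e ∈ uDivisors d) (hd : d ∈ uDivisors n) :
    e ∈ uDivisors n := by
  rcases mem_uDivisors.1 he with ⟨⟨hed, hce⟩, hd0⟩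
  rcases mem_uDivisors.1 hd with ⟨⟨hdn, hcd⟩, hn0⟩
  have he0 : 0 < e := Nat.pos_of_ne_zero (ne_zero_of_mem_uDivisors he)
  refine mem_uDivisors.2 ⟨⟨hed.trans hdn, ?_⟩, hn0⟩
  rw [aux_div he0 hed hdn]
  exact Nat.Coprime.mul_right hce (Nat.Coprime.coprime_dvd_left hed hcd)

lemma div_dvd_div_of_dvd_of_dvd {e d n : ℕ} (hed : e ∣ d) (hdn : d ∣ n) :
    n / d ∣ n / e := by
  rcases Nat.eq_zero_or_pos e with rfl | he0
  · obtain rfl : d = 0 := Nat.eq_zero_of_zero_dvd hed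
    obtain rfl : n = 0 := Nat.eq_zero_of_zero_dvd hdn
    simp
  rw [aux_div he0 hed hdn]
  exact dvd_mul_left _ _

/-- Closure of unitary divisors under lcm. -/
lemma lcm_mem_uDivisors {e g n : ℕ} (he : e ∈ uDivisors n) (hg : g ∈ uDivisors n) :
    Nat.lcm e g ∈ uDivisors n := by
  rcases mem_uDivisors.1 he with ⟨⟨hen, hce⟩, hn0⟩
  rcases mem_uDivisors.1 hg with ⟨⟨hgn, hcg⟩, -⟩
  have hL : Nat.lcm e g ∣ n := Nat.lcm_dvd hen hgn
  refine mem_uDivisors.2 ⟨⟨hL, ?_⟩, hn0⟩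
  rw [Nat.eq_one_iff_not_exists_prime_dvd]
  intro p hp hpd
  have hpe : p ∣ e ∨ p ∣ g := by
    have : p ∣ e * g := (hpd.trans (Nat.gcd_dvd_left _ _)).trans (Nat.lcm_dvd_mul e g)
    exact (Nat.Prime.dvd_mul hp).1 this
  have hpn : p ∣ n / Nat.lcm e g := hpd.trans (Nat.gcd_dvd_right _ _)
  rcases hpe with hpe | hpe
  · have h1 : p ∣ n / e := hpn.trans (div_dvd_div_of_dvd_of_dvd (Nat.dvd_lcm_left e g) hL)
    exact Nat.Prime.one_lt hp |>.ne' (Nat.eq_one_of_dvd_one (hce ▸ Nat.dvd_gcd hpe h1))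
  · have h1 : p ∣ n / g := hpn.trans (div_dvd_div_of_dvd_of_dvd (Nat.dvd_lcm_right e g) hL)
    exact Nat.Prime.one_lt hp |>.ne' (Nat.eq_one_of_dvd_one (hcg ▸ Nat.dvd_gcd hpe h1))

lemma gcud_mem {n q : ℕ} (hn : n ≠ 0) (hq : q ≠ 0) :
    gcud n q ∈ uDivisors n ∩ uDivisors q := by
  have hne : (uDivisors n ∩ uDivisors q).Nonempty :=
    ⟨1, Finset.mem_inter.2 ⟨one_mem_uDivisors hn, one_mem_uDivisors hq⟩⟩
  have : gcud n q = (uDivisors n ∩ uDivisors q).max' hne := by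
    rw [Finset.max'_eq_sup' , Finset.sup'_eq_sup]
    rfl
  rw [this]
  exact Finset.max'_mem _ _

lemma dvd_gcud {e n q : ℕ} (he : e ∈ uDivisors n ∩ uDivisors q) : e ∣ gcud n q := by
  have hn : n ≠ 0 := (mem_uDivisors.1 (Finset.mem_inter.1 he).1).2
  have hq : q ≠ 0 := (mem_uDivisors.1 (Finset.mem_inter.1 he).2).2
  have hg := gcud_mem hn hq
  have hL : Nat.lcm e (gcud n q) ∈ uDivisors n ∩ uDivisors q := by
    rw [Finset.mem_inter] at he hg ⊢
    exact ⟨lcm_mem_uDivisors he.1 hg.1, lcm_mem_uDivisors he.2 hg.2⟩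
  have h1 : Nat.lcm e (gcud n q) ≤ gcud n q := Finset.le_sup (f := id) hL
  have hg0 : gcud n q ≠ 0 := ne_zero_of_mem_uDivisors (Finset.mem_inter.1 hg).1
  have hL0 : Nat.lcm e (gcud n q) ≠ 0 := ne_zero_of_mem_uDivisors (Finset.mem_inter.1 hL).1
  have h2 : gcud n q ≤ Nat.lcm e (gcud n q) :=
    Nat.le_of_dvd (Nat.pos_of_ne_zero hL0) (Nat.dvd_lcm_right _ _)
  have : Nat.lcm e (gcud n q) = gcud n q := le_antisymm h1 h2
  exact this ▸ Nat.dvd_lcm_left _ _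

lemma uD_of_dvd {e g n : ℕ} (hdvd : e ∣ g) (he : e ∈ uDivisors n)
    (hg : g ∈ uDivisors n) : e ∈ uDivisors g := by
  rcases mem_uDivisors.1 he with ⟨⟨hen, hce⟩, hn0⟩
  rcases mem_uDivisors.1 hg with ⟨⟨hgn, -⟩, -⟩
  refine mem_uDivisors.2 ⟨⟨hdvd, ?_⟩, ne_zero_of_mem_uDivisors hg⟩
  have he0 : 0 < e := Nat.pos_of_ne_zero (ne_zero_of_mem_uDivisors he)
  have : g / e ∣ n / e := ⟨n / g, aux_div he0 hdvd hgn⟩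
  exact Nat.eq_one_of_dvd_one (hce ▸ Nat.dvd_gcd (Nat.gcd_dvd_left _ _)
    ((Nat.gcd_dvd_right _ _).trans this))

lemma uDivisors_gcud {n q : ℕ} (hn : n ≠ 0) (hq : q ≠ 0) :
    uDivisors (gcud n q) = uDivisors n ∩ uDivisors q := by
  have hg := gcud_mem hn hq
  rw [Finset.mem_inter] at hg
  ext e
  constructor
  · intro he
    exact Finset.mem_inter.2 ⟨uD_trans he hg.1, uD_trans he hg.2⟩
  · intro he
    have hdvd : e ∣ gcud n q := dvd_gcud he
    exact uD_of_dvd hdvd (Finset.mem_inter.1 he).1 hg.1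

/-- If `e ∥ d` and `d ∥ q` then `d/e ∥ q/e`. -/
lemma div_mem_uDivisors_div {e d q : ℕ} (he : e ∈ uDivisors d) (hd : d ∈ uDivisors q) :
    d / e ∈ uDivisors (q / e) := by
  rcases mem_uDivisors.1 he with ⟨⟨hed, hce⟩, hd0⟩
  rcases mem_uDivisors.1 hd with ⟨⟨hdq, hcd⟩, hq0⟩
  have he0 : 0 < e := Nat.pos_of_ne_zero (ne_zero_of_mem_uDivisors he)
  have hde0 : 0 < d / e := Nat.div_pos (Nat.le_of_dvd (Nat.pos_of_ne_zero hd0) hed) he0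
  have h1 : d / e ∣ q / e := ⟨q / d, aux_div he0 hed hdq⟩
  refine mem_uDivisors.2 ⟨⟨h1, ?_⟩, ?_⟩
  · have hkey : (q / e) / (d / e) = q / d := by
      rw [aux_div he0 hed hdq, Nat.mul_div_cancel_left _ hde0]
    rw [hkey]
    exact Nat.eq_one_of_dvd_one (hcd ▸ Nat.dvd_gcd
      ((Nat.gcd_dvd_left _ _).trans (Nat.div_dvd_of_dvd hed)) (Nat.gcd_dvd_right _ _))
  · intro h
    have := Nat.div_pos (Nat.le_of_dvd (Nat.pos_of_ne_zero hq0) (hed.trans hdq)) he0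
    omega

/-- If `e ∥ q` and `f ∥ q/e` then `e*f ∥ q` and `e ∥ e*f`. -/
lemma mul_mem_uDivisors {e f q : ℕ} (he : e ∈ uDivisors q) (hf : f ∈ uDivisors (q / e)) :
    e * f ∈ uDivisors q ∧ e ∈ uDivisors (e * f) := by
  rcases mem_uDivisors.1 he with ⟨⟨heq, hce⟩, hq0⟩
  rcases mem_uDivisors.1 hf with ⟨⟨hfq, hcf⟩, hqe0⟩
  have he0 : 0 < e := Nat.pos_of_ne_zero (ne_zero_of_mem_uDivisors he)
  have hf0 : 0 < f := Nat.pos_of_ne_zero (ne_zero_of_mem_uDivisors hf)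
  have hef : e * f ∣ q := by
    have : e * f ∣ e * (q / e) := mul_dvd_mul_left e hfq
    rwa [Nat.mul_div_cancel' heq] at this
  have hq2 : q / (e * f) = (q / e) / f := by rw [Nat.div_div_eq_div_mul]
  constructor
  · refine mem_uDivisors.2 ⟨⟨hef, ?_⟩, hq0⟩
    rw [hq2]
    have hcoef : Nat.Coprime e ((q / e) / f) :=
      Nat.Coprime.coprime_dvd_right (Nat.div_dvd_of_dvd hfq) hce
    exact Nat.Coprime.mul hcoef hcf
  · refine mem_uDivisors.2 ⟨⟨dvd_mul_right e f, ?_⟩, by positivity⟩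
    rw [Nat.mul_div_cancel_left _ he0]
    exact Nat.Coprime.coprime_dvd_right hfq hce

/-! ### The factorization characterization and the Möbius-type sum -/

lemma uD_factorization_eq {f m p : ℕ} (hf : f ∈ uDivisors m) (hp : p ∈ f.primeFactors) :
    f.factorization p = m.factorization p := by
  rcases mem_uDivisors.1 hf with ⟨⟨hfm, hcf⟩, hm0⟩
  have hf0 : f ≠ 0 := ne_zero_of_mem_uDivisors hf
  rcases Nat.mem_primeFactors.1 hp with ⟨hpp, hpf, -⟩
  have hle : f.factorization p ≤ m.factorization p :=
    (Nat.factorization_le_iff_dvd hf0 hm0).2 hfm p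
  rcases lt_or_eq_of_le hle with hlt | heq
  · exfalso
    have hdvd : p ∣ m / f := by
      rw [Nat.Prime.dvd_iff_one_le_factorization hpp
        (Nat.div_pos (Nat.le_of_dvd (Nat.pos_of_ne_zero hm0) hfm)
          (Nat.pos_of_ne_zero hf0)).ne', Nat.factorization_div hfm]
      simp only [Finsupp.coe_tsub, Pi.sub_apply]
      omega
    exact Nat.Prime.one_lt hpp |>.ne'
      (Nat.eq_one_of_dvd_one (hcf ▸ Nat.dvd_gcd hpf hdvd))
  · exact heq

lemma uPart_spec {m : ℕ} (hm : m ≠ 0) {S : Finset ℕ} (hS : S ⊆ m.primeFactors) :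
    (∏ p ∈ S, p ^ m.factorization p) ∈ uDivisors m ∧
    (∏ p ∈ S, p ^ m.factorization p).primeFactors = S := by
  have hprime : ∀ p ∈ S, Nat.Prime p := fun p hp => Nat.prime_of_mem_primeFactors (hS hp)
  have hpos : ∀ p ∈ S, 0 < m.factorization p := fun p hp =>
    Nat.Prime.factorization_pos_of_dvd (hprime p hp) hm (Nat.dvd_of_mem_primeFactors (hS hp))
  set D := ∏ p ∈ S, p ^ m.factorization p with hD
  have hD0 : D ≠ 0 := Finset.prod_ne_zero_iff.2 fun p hp =>
    pow_ne_zero _ (Nat.Prime.ne_zero (hprime p hp))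
  have hfacD : ∀ q : ℕ, D.factorization q = if q ∈ S then m.factorization q else 0 := by
    intro q
    rw [hD, Nat.factorization_prod (fun p hp => pow_ne_zero _ (Nat.Prime.ne_zero (hprime p hp)))]
    rw [Finset.sum_apply']
    have : ∀ p ∈ S, (Nat.factorization (p ^ m.factorization p)) q =
        if p = q then m.factorization q else 0 := by
      intro p hp
      rw [Nat.Prime.factorization_pow (hprime p hp)]
      simp only [Finsupp.single_apply]
      split_ifs with h
      · subst h; rfl
      · rfl
    rw [Finset.sum_congr rfl this, Finset.sum_ite_eq' S q (fun _ => m.factorization q)]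
  have hdvd : D ∣ m := by
    rw [← Nat.factorization_le_iff_dvd hD0 hm]
    intro q
    rw [hfacD q]
    split_ifs <;> simp
  have hPF : D.primeFactors = S := by
    ext q
    rw [Nat.mem_primeFactors]
    constructor
    · rintro ⟨hq, hqD, -⟩
      by_contra hqS
      have : D.factorization q = 0 := by rw [hfacD q, if_neg hqS]
      rw [Nat.Prime.dvd_iff_one_le_factorization hq hD0] at hqD
      omega
    · intro hq
      refine ⟨hprime q hq, ?_, hD0⟩
      rw [Nat.Prime.dvd_iff_one_le_factorization (hprime q hq) hD0, hfacD q, if_pos hq]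
      exact hpos q hq
  refine ⟨mem_uDivisors.2 ⟨⟨hdvd, ?_⟩, hm⟩, hPF⟩
  rw [Nat.eq_one_iff_not_exists_prime_dvd]
  intro p hp hpd
  have hp1 : p ∣ D := hpd.trans (Nat.gcd_dvd_left _ _)
  have hp2 : p ∣ m / D := hpd.trans (Nat.gcd_dvd_right _ _)
  have hpS : p ∈ S := hPF ▸ Nat.mem_primeFactors.2 ⟨hp, hp1, hD0⟩
  rw [Nat.Prime.dvd_iff_one_le_factorization hp
      (Nat.div_pos (Nat.le_of_dvd (Nat.pos_of_ne_zero hm) hdvd)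
        (Nat.pos_of_ne_zero hD0)).ne',
    Nat.factorization_div hdvd] at hp2
  simp only [Finsupp.coe_tsub, Pi.sub_apply] at hp2
  rw [hfacD p, if_pos hpS] at hp2
  omega

lemma uD_eq_prod {f m : ℕ} (hf : f ∈ uDivisors m) :
    f = ∏ p ∈ f.primeFactors, p ^ m.factorization p := by
  have hf0 : f ≠ 0 := ne_zero_of_mem_uDivisors hf
  conv_lhs => rw [← Nat.factorization_prod_pow_eq_self hf0]
  rw [Finsupp.prod]
  exact Finset.prod_congr rfl (fun p hp => by
    rw [uD_factorization_eq hf (Nat.support_factorization f ▸ hp)])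

lemma sum_mustar {m : ℕ} (hm : m ≠ 0) :
    ∑ f ∈ uDivisors m, mustar f = if m = 1 then 1 else 0 := by
  have key : ∑ f ∈ uDivisors m, mustar f =
      ∑ S ∈ m.primeFactors.powerset, (-1 : ℤ) ^ S.card := by
    refine Finset.sum_nbij' (fun f => f.primeFactors)
      (fun S => ∏ p ∈ S, p ^ m.factorization p) ?_ ?_ ?_ ?_ ?_
    · intro f hf
      rcases mem_uDivisors.1 hf with ⟨⟨hfm, -⟩, -⟩
      exact Finset.mem_powerset.2 (Nat.primeFactors_mono hfm hm)
    · intro S hS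
      exact (uPart_spec hm (Finset.mem_powerset.1 hS)).1
    · intro f hf
      exact (uD_eq_prod hf).symm
    · intro S hS
      exact (uPart_spec hm (Finset.mem_powerset.1 hS)).2
    · intro f hf
      rfl
  rw [key, Finset.sum_powerset_neg_one_pow_card]
  congr 1
  rw [Nat.primeFactors_eq_empty]
  simp [hm]

/-! ### The main theorem -/

theorem sum_ctilde_over_unitary_divisors (q n : ℕ) (hq : 0 < q) (hn : 0 < n) :
    ∑ d ∈ uDivisors q, ctilde d n =
      if q ∣ n ∧ Nat.gcd q (n / q) = 1 then (q : ℤ) else 0 := by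
  have hq0 : q ≠ 0 := hq.ne'
  have hn0 : n ≠ 0 := hn.ne'
  have step1 : ∑ d ∈ uDivisors q, ctilde d n =
      ∑ d ∈ uDivisors q, ∑ e ∈ uDivisors n ∩ uDivisors d, (e : ℤ) * mustar (d / e) := by
    refine Finset.sum_congr rfl fun d hd => ?_
    rw [ctilde, uDivisors_gcud hn0 (ne_zero_of_mem_uDivisors hd)]
  rw [step1]
  rw [Finset.sum_sigma']
  have step2 : ∑ x ∈ (uDivisors q).sigma (fun d => uDivisors n ∩ uDivisors d),
        (x.2 : ℤ) * mustar (x.1 / x.2) =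
      ∑ x ∈ (uDivisors n ∩ uDivisors q).sigma (fun e => uDivisors (q / e)),
        (x.1 : ℤ) * mustar x.2 := by
    refine Finset.sum_nbij' (fun x => ⟨x.2, x.1 / x.2⟩) (fun x => ⟨x.1 * x.2, x.1⟩)
      ?_ ?_ ?_ ?_ ?_
    · rintro ⟨d, e⟩ hx
      rw [Finset.mem_sigma] at hx
      obtain ⟨hd, he⟩ := hx
      rw [Finset.mem_inter] at he
      refine Finset.mem_sigma.2 ⟨Finset.mem_inter.2 ⟨he.1, uD_trans he.2 hd⟩, ?_⟩
      exact div_mem_uDivisors_div he.2 hd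
    · rintro ⟨e, f⟩ hx
      rw [Finset.mem_sigma] at hx
      obtain ⟨he, hf⟩ := hx
      rw [Finset.mem_inter] at he
      obtain ⟨h1, h2⟩ := mul_mem_uDivisors he.2 hf
      exact Finset.mem_sigma.2 ⟨h1, Finset.mem_inter.2 ⟨he.1, h2⟩⟩
    · rintro ⟨d, e⟩ hx
      rw [Finset.mem_sigma] at hx
      obtain ⟨hd, he⟩ := hx
      rw [Finset.mem_inter] at he
      have : e ∣ d := (mem_uDivisors.1 he.2).1.1
      simp only [Sigma.mk.inj_iff, heq_eq_eq]
      exact ⟨Nat.mul_div_cancel' this, trivial⟩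
    · rintro ⟨e, f⟩ hx
      rw [Finset.mem_sigma] at hx
      obtain ⟨he, hf⟩ := hx
      rw [Finset.mem_inter] at he
      have he0 : 0 < e := Nat.pos_of_ne_zero (ne_zero_of_mem_uDivisors he.1)
      simp only [Sigma.mk.inj_iff, heq_eq_eq]
      exact ⟨trivial, Nat.mul_div_cancel_left f he0⟩
    · rintro ⟨d, e⟩ hx
      rfl
  rw [step2, Finset.sum_sigma]
  have step3 : ∀ e ∈ uDivisors n ∩ uDivisors q,
      ∑ f ∈ uDivisors (q / e), (e : ℤ) * mustar f = if e = q then (q : ℤ) else 0 := by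
    intro e he
    rw [Finset.mem_inter] at he
    have heq : e ∣ q := (mem_uDivisors.1 he.2).1.1
    have he0 : 0 < e := Nat.pos_of_ne_zero (ne_zero_of_mem_uDivisors he.1)
    have hqe0 : q / e ≠ 0 := (Nat.div_pos (Nat.le_of_dvd hq heq) he0).ne'
    rw [← Finset.mul_sum, sum_mustar hqe0]
    have : q / e = 1 ↔ e = q := by
      constructor
      · intro h
        have := Nat.div_mul_cancel heq
        rw [h, one_mul] at this
        exact this
      · rintro rfl
        exact Nat.div_self hq
    split_ifs with h1 h2 h2
    · rw [mul_one, h2]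
    · exact absurd (this.1 h1) h2
    · exact absurd (this.2 h2) h1
    · rw [mul_zero]
  rw [Finset.sum_congr rfl step3, Finset.sum_ite_eq' (uDivisors n ∩ uDivisors q) q
    (fun _ => (q : ℤ))]
  have hqq : q ∈ uDivisors q := self_mem_uDivisors hq0
  by_cases hcase : q ∣ n ∧ Nat.gcd q (n / q) = 1
  · rw [if_pos (Finset.mem_inter.2 ⟨mem_uDivisors.2 ⟨hcase, hn0⟩, hqq⟩), if_pos hcase]
  · rw [if_neg, if_neg hcase]
    intro h
    exact hcase (mem_uDivisors.1 (Finset.mem_inter.1 h).1).1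
end

section
/- For the classical Ramanujan sums c_q(n), for all q, n ≥ 1, Σ_{d ∣ q} |c_d(n)| = 2^{ω(q/gcd(n,q))} · gcd(n,q). -/
/-- The classical Ramanujan sum c_q(n) = Σ_{d ∣ gcd(n,q)} d μ(q/d). -/
noncomputable def ramanujanSum (q n : ℕ) : ℤ :=
  ∑ d ∈ (Nat.gcd n q).divisors, (d : ℤ) * ArithmeticFunction.moebius (q / d)

open ArithmeticFunction Finset
open scoped ArithmeticFunction.Moebius ArithmeticFunction.zeta

namespace SumAbsRamanujanAux

/-- The multiplicative function `e ↦ e` if `e ∣ n`, else `0`. -/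
noncomputable def idDvd (n : ℕ) : ArithmeticFunction ℤ :=
  ⟨fun d => if d ∣ n ∧ d ≠ 0 then (d : ℤ) else 0, by simp⟩

lemma idDvd_apply (n d : ℕ) : idDvd n d = if d ∣ n ∧ d ≠ 0 then (d : ℤ) else 0 := rfl

lemma idDvd_mult (n : ℕ) : (idDvd n).IsMultiplicative := by
  constructor
  · simp [idDvd_apply]
  · intro a b hab
    simp only [idDvd_apply]
    by_cases h : a * b ∣ n ∧ a * b ≠ 0
    · have ha : a ∣ n := (dvd_mul_right a b).trans h.1
      have hb : b ∣ n := (dvd_mul_left b a).trans h.1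
      have ha0 : a ≠ 0 := fun e => h.2 (by simp [e])
      have hb0 : b ≠ 0 := fun e => h.2 (by simp [e])
      rw [if_pos h, if_pos ⟨ha, ha0⟩, if_pos ⟨hb, hb0⟩]; push_cast; ring
    · rw [if_neg h]
      by_cases ha : a ∣ n ∧ a ≠ 0
      · by_cases hb : b ∣ n ∧ b ≠ 0
        · exact absurd ⟨hab.mul_dvd_of_dvd_of_dvd ha.1 hb.1, mul_ne_zero ha.2 hb.2⟩ h
        · simp [hb]
      · simp [ha]

/-- The Ramanujan sum as an arithmetic function of `q` (for fixed `n`). -/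
noncomputable def c (n : ℕ) : ArithmeticFunction ℤ := idDvd n * (μ : ArithmeticFunction ℤ)

lemma c_mult (n : ℕ) : (c n).IsMultiplicative :=
  (idDvd_mult n).mul isMultiplicative_moebius

lemma c_apply (n d : ℕ) (hd : 0 < d) : c n d = ramanujanSum d n := by
  rw [c, mul_apply, Nat.sum_divisorsAntidiagonal (fun x y => idDvd n x * μ y)]
  unfold ramanujanSum
  have hset : (Nat.gcd n d).divisors = d.divisors.filter (· ∣ n) := by
    ext e
    simp only [Nat.mem_divisors, Finset.mem_filter, Nat.dvd_gcd_iff]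
    constructor
    · rintro ⟨⟨h1, h2⟩, -⟩; exact ⟨⟨h2, hd.ne'⟩, h1⟩
    · rintro ⟨⟨h2, -⟩, h1⟩
      exact ⟨⟨h1, h2⟩, Nat.gcd_ne_zero_right hd.ne'⟩
  rw [hset, Finset.sum_filter]
  apply Finset.sum_congr rfl
  intro e he
  rw [idDvd_apply]
  by_cases h : e ∣ n
  · rw [if_pos ⟨h, (Nat.pos_of_mem_divisors he).ne'⟩, if_pos h]
  · simp [h]

/-- The absolute value of the Ramanujan sum. -/
noncomputable def absC (n : ℕ) : ArithmeticFunction ℤ := ⟨fun d => |c n d|, by simp⟩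

lemma absC_apply (n d : ℕ) : absC n d = |c n d| := rfl

lemma absC_mult (n : ℕ) : (absC n).IsMultiplicative := by
  constructor
  · simp [absC_apply, (c_mult n).map_one]
  · intro a b hab
    simp [absC_apply, (c_mult n).map_mul_of_coprime hab, abs_mul]

/-- Divisor-sum of `absC`. -/
noncomputable def F (n : ℕ) : ArithmeticFunction ℤ := absC n * (ζ : ArithmeticFunction ℤ)

lemma F_apply (n q : ℕ) : F n q = ∑ d ∈ q.divisors, |c n d| := coe_mul_zeta_apply

lemma F_mult (n : ℕ) : (F n).IsMultiplicative :=
  (absC_mult n).mul isMultiplicative_zeta.natCast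

lemma sum_eq_F (n q : ℕ) : ∑ d ∈ q.divisors, |ramanujanSum d n| = F n q := by
  rw [F_apply]
  exact Finset.sum_congr rfl fun d hd => by
    rw [c_apply n d (Nat.pos_of_mem_divisors hd)]

lemma gcd_prime_pow {p : ℕ} (hp : p.Prime) {n : ℕ} (hn : 0 < n) (j : ℕ) :
    Nat.gcd n (p ^ j) = p ^ min (n.factorization p) j := by
  have hpj : (p : ℕ) ^ j ≠ 0 := pow_ne_zero _ hp.pos.ne'
  obtain ⟨i, hij, hi⟩ := (Nat.dvd_prime_pow hp).mp (Nat.gcd_dvd_right n (p ^ j))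
  have h2 : (Nat.gcd n (p ^ j)).factorization p = min (n.factorization p) j := by
    rw [Nat.factorization_gcd hn.ne' hpj]
    simp [hp.factorization_pow]
  rw [hi] at h2 ⊢
  rw [hp.factorization_pow] at h2
  simp only [Finsupp.single_eq_same] at h2
  rw [h2]

lemma ram_prime_pow {p : ℕ} (hp : p.Prime) {n : ℕ} (hn : 0 < n) (j : ℕ) :
    ramanujanSum (p ^ j) n =
      (if j ≤ n.factorization p then (p : ℤ) ^ j else 0)
        - (if 1 ≤ j ∧ j ≤ n.factorization p + 1 then (p : ℤ) ^ (j - 1) else 0) := by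
  unfold ramanujanSum
  rw [gcd_prime_pow hp hn j, Nat.sum_divisors_prime_pow hp]
  have key : ∀ i ∈ range (min (n.factorization p) j + 1),
      ((p ^ i : ℕ) : ℤ) * (μ (p ^ j / p ^ i) : ℤ) =
        (if i = j then (p : ℤ) ^ i else 0) + (if i + 1 = j then -(p : ℤ) ^ i else 0) := by
    intro i hi
    rw [mem_range, Nat.lt_succ_iff] at hi
    have hij : i ≤ j := hi.trans (min_le_right _ _)
    rw [Nat.pow_div hij hp.pos]
    rcases Nat.eq_or_lt_of_le hij with rfl | hlt
    · simp
    · have h0 : j - i ≠ 0 := Nat.sub_ne_zero_of_lt hlt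
      rw [moebius_apply_prime_pow hp h0]
      by_cases h1 : j - i = 1
      · rw [if_pos h1, if_neg (by omega : ¬ i = j), if_pos (by omega : i + 1 = j)]
        push_cast; ring
      · rw [if_neg h1, if_neg (by omega : ¬ i = j), if_neg (by omega : ¬ i + 1 = j)]
        simp
  rw [Finset.sum_congr rfl key, Finset.sum_add_distrib, sub_eq_add_neg]
  congr 1
  · rw [Finset.sum_ite_eq' (range (min (n.factorization p) j + 1)) j
      (fun i => (p : ℤ) ^ i)]
    simp only [mem_range, Nat.lt_succ_iff]
    by_cases h : j ≤ n.factorization p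
    · rw [if_pos (le_min h le_rfl), if_pos h]
    · rw [if_neg (by omega), if_neg h]
  · cases j with
    | zero => simp
    | succ j' =>
      simp only [add_left_inj]
      rw [Finset.sum_ite_eq' (range (min (n.factorization p) (j' + 1) + 1)) j'
        (fun i => -(p : ℤ) ^ i)]
      simp only [mem_range, Nat.lt_succ_iff]
      by_cases h : j' + 1 ≤ n.factorization p + 1
      · rw [if_pos (by omega), if_pos ⟨by omega, h⟩]
        simp
      · rw [if_neg (by omega), if_neg (by omega)]
        simp

lemma prime_pow_case {p : ℕ} (hp : p.Prime) {k : ℕ} (hk : 0 < k) {n : ℕ} (hn : 0 < n) :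
    ∑ d ∈ (p ^ k).divisors, |ramanujanSum d n| =
      2 ^ ((p ^ k) / Nat.gcd n (p ^ k)).primeFactors.card * (Nat.gcd n (p ^ k) : ℤ) := by
  have hplt : (1 : ℤ) < (p : ℤ) := by exact_mod_cast hp.one_lt
  rw [Nat.sum_divisors_prime_pow hp, Finset.sum_range_succ']
  have h0 : |ramanujanSum (p ^ 0) n| = 1 := by
    rw [ram_prime_pow hp hn 0]; norm_num
  have hterm : ∀ i, |ramanujanSum (p ^ (i + 1)) n| =
      (if i < n.factorization p then (p : ℤ) ^ (i + 1) - (p : ℤ) ^ i else 0)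
        + (if i = n.factorization p then (p : ℤ) ^ (n.factorization p) else 0) := by
    intro i
    rw [ram_prime_pow hp hn (i + 1)]
    rcases lt_trichotomy i (n.factorization p) with h | h | h
    · rw [if_pos (by omega), if_pos ⟨by omega, by omega⟩, if_pos h, if_neg (by omega),
        Nat.add_sub_cancel, add_zero, abs_of_nonneg]
      have : (p : ℤ) ^ i ≤ (p : ℤ) ^ (i + 1) :=
        pow_le_pow_right₀ (by linarith) (by omega)
      linarith
    · rw [if_neg (by omega), if_pos ⟨by omega, by omega⟩, Nat.add_sub_cancel, zero_sub, abs_neg,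
        abs_of_nonneg (by positivity), if_neg (by omega), if_pos h, zero_add, h]
    · rw [if_neg (by omega), if_neg (by omega), if_neg (by omega), if_neg (by omega)]
      simp
  rw [Finset.sum_congr rfl (fun i _ => hterm i), Finset.sum_add_distrib]
  have hs1 : ∑ i ∈ range k,
      (if i < n.factorization p then (p : ℤ) ^ (i + 1) - (p : ℤ) ^ i else 0)
      = (p : ℤ) ^ (min (n.factorization p) k) - 1 := by
    rw [← Finset.sum_filter]
    have hfil : (range k).filter (fun i => i < n.factorization p)
        = range (min (n.factorization p) k) := by
      ext i
      simp only [mem_filter, mem_range, lt_min_iff]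
      omega
    rw [hfil, Finset.sum_range_sub (fun i => (p : ℤ) ^ i)]
    simp
  have hs2 : ∑ i ∈ range k, (if i = n.factorization p then (p : ℤ) ^ (n.factorization p) else 0)
      = if n.factorization p < k then (p : ℤ) ^ (n.factorization p) else 0 := by
    rw [Finset.sum_ite_eq' (range k) (n.factorization p)
      (fun _ => (p : ℤ) ^ (n.factorization p))]
    simp only [mem_range]
  rw [h0, hs1, hs2, gcd_prime_pow hp hn k]
  by_cases h : n.factorization p < k
  · have hmin : min (n.factorization p) k = n.factorization p := by omega
    rw [hmin, if_pos h, Nat.pow_div (by omega) hp.pos,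
      Nat.primeFactors_prime_pow (by omega) hp, Finset.card_singleton]
    push_cast
    ring
  · have hmin : min (n.factorization p) k = k := by omega
    rw [hmin, if_neg h, Nat.div_self (pow_pos hp.pos k)]
    simp only [Nat.primeFactors_one, Finset.card_empty, pow_zero, one_mul]
    push_cast
    ring

end SumAbsRamanujanAux

open SumAbsRamanujanAux in
theorem sum_abs_ramanujanSum (q n : ℕ) (hq : 0 < q) (hn : 0 < n) :
    ∑ d ∈ q.divisors, |ramanujanSum d n| =
      2 ^ (q / Nat.gcd n q).primeFactors.card * (Nat.gcd n q : ℤ) := by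
  revert hq
  induction q using Nat.recOnPosPrimePosCoprime with
  | prime_pow p k hp hk => exact fun _ => prime_pow_case hp hk hn
  | zero => exact fun h => absurd h (lt_irrefl 0)
  | one =>
    intro _
    norm_num [ramanujanSum]
  | coprime a b ha hb hab iha ihb =>
    intro _
    have hA : 0 < a := by omega
    have hB : 0 < b := by omega
    have key : ∑ d ∈ (a * b).divisors, |ramanujanSum d n|
        = (∑ d ∈ a.divisors, |ramanujanSum d n|) * (∑ d ∈ b.divisors, |ramanujanSum d n|) := by
      rw [sum_eq_F, sum_eq_F, sum_eq_F, (F_mult n).map_mul_of_coprime hab]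
    rw [key, iha hA, ihb hB]
    have hga : Nat.gcd n a ∣ a := Nat.gcd_dvd_right n a
    have hgb : Nat.gcd n b ∣ b := Nat.gcd_dvd_right n b
    have hgcd : Nat.gcd n (a * b) = Nat.gcd n a * Nat.gcd n b := hab.gcd_mul n
    have hdiv : (a * b) / (Nat.gcd n a * Nat.gcd n b) = (a / Nat.gcd n a) * (b / Nat.gcd n b) :=
      (Nat.div_mul_div_comm hga hgb).symm
    have hcop : Nat.Coprime (a / Nat.gcd n a) (b / Nat.gcd n b) :=
      Nat.Coprime.coprime_dvd_left (Nat.div_dvd_of_dvd hga)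
        (Nat.Coprime.coprime_dvd_right (Nat.div_dvd_of_dvd hgb) hab)
    rw [hgcd, hdiv, hcop.primeFactors_mul,
      Finset.card_union_of_disjoint hcop.disjoint_primeFactors]
    push_cast
    ring
end

section
/- For every n ≥ 1, σ*(n)/n = ζ(2) Σ_{q=1}^∞ φ₂(q) c̃_q(n) / q⁴, where the series converges absolutely. -/
/-- σ*(n), the sum of unitary divisors of n. -/
def sigmaStar (n : ℕ) : ℕ := ∑ d ∈ uDivisors n, d

/-- The Jordan totient φ₂(q) = q² Π_{p ∣ q} (1 − 1/p²), as a complex number. -/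
noncomputable def jordanTwo (q : ℕ) : ℂ :=
  (q : ℂ) ^ 2 * ∏ p ∈ q.primeFactors, (1 - 1 / (p : ℂ) ^ 2)

namespace SigmaStarAux

open Finset

/-- `d` is a unitary divisor of `n`. -/
def UD (d n : ℕ) : Prop := d ∣ n ∧ Nat.Coprime d (n / d)

lemma mem_uDivisors {d n : ℕ} (hn : n ≠ 0) : d ∈ uDivisors n ↔ UD d n := by
  simp only [uDivisors, Finset.mem_filter, Nat.mem_divisors, UD, Nat.Coprime]
  tauto

lemma UD.pos {d n : ℕ} (h : UD d n) (hn : 0 < n) : 0 < d :=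
  Nat.pos_of_dvd_of_pos h.1 hn

lemma UD.one (n : ℕ) : UD 1 n := ⟨one_dvd n, Nat.coprime_one_left _⟩

lemma UD.refl {n : ℕ} (hn : n ≠ 0) : UD n n :=
  ⟨dvd_rfl, by simp [Nat.Coprime, Nat.div_self (Nat.pos_of_ne_zero hn)]⟩

lemma UD.trans {d e n : ℕ} (h1 : UD d e) (h2 : UD e n) (hd : d ≠ 0) : UD d n := by
  obtain ⟨⟨a, ha⟩, hc1⟩ := h1
  obtain ⟨⟨b, hb⟩, hc2⟩ := h2
  have he : e ≠ 0 := by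
    rintro rfl
    rw [Nat.div_zero] at hc2
    simp [Nat.Coprime] at hc2
  have ha0 : a ≠ 0 := by rintro rfl; exact he (by simpa using ha)
  subst ha hb
  refine ⟨⟨a * b, by ring⟩, ?_⟩
  rw [show d * a * b = d * (a * b) by ring, Nat.mul_div_cancel_left _ (Nat.pos_of_ne_zero hd)]
  have hca : Nat.Coprime d a := by
    simpa [Nat.mul_div_cancel_left _ (Nat.pos_of_ne_zero hd)] using hc1
  have hcb : Nat.Coprime d b := by
    have : Nat.Coprime (d * a) b := by
      simpa [Nat.mul_div_cancel_left _ (Nat.pos_of_ne_zero he)] using hc2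
    exact Nat.Coprime.coprime_dvd_left (dvd_mul_right d a) this
  exact hca.mul_right hcb

/-- unitary divisors of coprime numbers are coprime -/
lemma coprime_of_dvd {d₁ d₂ a b : ℕ} (h1 : d₁ ∣ a) (h2 : d₂ ∣ b) (hab : Nat.Coprime a b) :
    Nat.Coprime d₁ d₂ := Nat.Coprime.coprime_dvd_right h2 (Nat.Coprime.coprime_dvd_left h1 hab)

lemma UD.mul_left {d₁ d₂ : ℕ} (hd : d₁ ≠ 0) (hcop : Nat.Coprime d₁ d₂) : UD d₁ (d₁ * d₂) :=
  ⟨dvd_mul_right _ _, by rwa [Nat.mul_div_cancel_left _ (Nat.pos_of_ne_zero hd)]⟩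

lemma UD.gcd_left {d a b : ℕ} (hab : Nat.Coprime a b) (h : UD d (a * b)) (ha : a ≠ 0) (hb : b ≠ 0) :
    UD (Nat.gcd d a) a := by
  have hsplit := (Nat.gcd_mul_gcd_eq_iff_dvd_mul_of_coprime hab).mpr h.1
  refine ⟨Nat.gcd_dvd_right d a, ?_⟩
  have hdvd : a / Nat.gcd d a ∣ a * b / d := by
    refine ⟨b / Nat.gcd d b, ?_⟩
    rw [Nat.div_mul_div_comm (Nat.gcd_dvd_right d a) (Nat.gcd_dvd_right d b), hsplit]
  exact Nat.Coprime.coprime_dvd_left (Nat.gcd_dvd_left d a)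
    (Nat.Coprime.coprime_dvd_right hdvd h.2)

lemma gcd_mul_gcd {d a b : ℕ} (hab : Nat.Coprime a b) (h : d ∣ a * b) :
    Nat.gcd d a * Nat.gcd d b = d :=
  (Nat.gcd_mul_gcd_eq_iff_dvd_mul_of_coprime hab).mpr h

/-- unitary-divisor factor of a unitary divisor -/
lemma UD.gcd_left_self {d a b : ℕ} (hab : Nat.Coprime a b) (h : d ∣ a * b) (hd : d ≠ 0) :
    UD (Nat.gcd d a) d := by
  have hsplit := (Nat.gcd_mul_gcd_eq_iff_dvd_mul_of_coprime hab).mpr h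
  have hg : Nat.gcd d a ≠ 0 := by
    intro h0
    rw [h0, zero_mul] at hsplit
    exact hd hsplit.symm
  have hcop : Nat.Coprime (Nat.gcd d a) (Nat.gcd d b) :=
    Nat.Coprime.coprime_dvd_right (Nat.gcd_dvd_right d b)
      (Nat.Coprime.coprime_dvd_left (Nat.gcd_dvd_right d a) hab)
  have := UD.mul_left hg hcop
  rwa [hsplit] at this

lemma UD.mul_udvd {d₁ d₂ n : ℕ} (h1 : UD d₁ n) (h2 : UD d₂ n) (hcop : Nat.Coprime d₁ d₂)
    (hn : 0 < n) : UD (d₁ * d₂) n := by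
  have hdvd : d₁ * d₂ ∣ n := hcop.mul_dvd_of_dvd_of_dvd h1.1 h2.1
  refine ⟨hdvd, ?_⟩
  obtain ⟨k, hk⟩ := hdvd
  have hd1 : 0 < d₁ := Nat.pos_of_dvd_of_pos h1.1 hn
  have hd2 : 0 < d₂ := Nat.pos_of_dvd_of_pos h2.1 hn
  have hnk : n / (d₁ * d₂) = k := by rw [hk, Nat.mul_div_cancel_left _ (by positivity)]
  have e1 : n / d₁ = d₂ * k := by
    rw [hk, show d₁ * d₂ * k = d₁ * (d₂ * k) by ring, Nat.mul_div_cancel_left _ hd1]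
  have e2 : n / d₂ = d₁ * k := by
    rw [hk, show d₁ * d₂ * k = d₂ * (d₁ * k) by ring, Nat.mul_div_cancel_left _ hd2]
  rw [hnk]
  have c1 : Nat.Coprime d₁ k := Nat.Coprime.coprime_dvd_right ⟨d₂, by rw [e1]; ring⟩ h1.2
  have c2 : Nat.Coprime d₂ k := Nat.Coprime.coprime_dvd_right ⟨d₁, by rw [e2]; ring⟩ h2.2
  exact c1.mul c2

lemma UD.mul_mul {d₁ d₂ a b : ℕ} (h1 : UD d₁ a) (h2 : UD d₂ b) (hab : Nat.Coprime a b)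
    (ha : 0 < a) (hb : 0 < b) : UD (d₁ * d₂) (a * b) := by
  have hd1 : 0 < d₁ := Nat.pos_of_dvd_of_pos h1.1 ha
  have hd2 : 0 < d₂ := Nat.pos_of_dvd_of_pos h2.1 hb
  refine ⟨mul_dvd_mul h1.1 h2.1, ?_⟩
  rw [← Nat.div_mul_div_comm h1.1 h2.1]
  have c11 := h1.2
  have c22 := h2.2
  have c12 : Nat.Coprime d₁ (b / d₂) :=
    Nat.Coprime.coprime_dvd_right (Nat.div_dvd_of_dvd h2.1)
      (Nat.Coprime.coprime_dvd_left h1.1 hab)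
  have c21 : Nat.Coprime d₂ (a / d₁) :=
    Nat.Coprime.coprime_dvd_right (Nat.div_dvd_of_dvd h1.1)
      (Nat.Coprime.coprime_dvd_left h2.1 hab.symm)
  exact (c11.mul_right c12).mul (c21.mul_right c22)

/-- The workhorse: sums over common unitary divisors factor along coprime decompositions. -/
lemma key_sum {M : Type*} [AddCommMonoid M] {n a b : ℕ} (hn : n ≠ 0) (ha : a ≠ 0) (hb : b ≠ 0)
    (hab : Nat.Coprime a b) (F : ℕ → M) :
    ∑ d ∈ uDivisors n ∩ uDivisors (a * b), F d
      = ∑ x ∈ (uDivisors n ∩ uDivisors a) ×ˢ (uDivisors n ∩ uDivisors b), F (x.1 * x.2) := by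
  have hab0 : a * b ≠ 0 := mul_ne_zero ha hb
  have hnpos := Nat.pos_of_ne_zero hn
  refine Finset.sum_nbij' (fun d => (Nat.gcd d a, Nat.gcd d b))
    (fun x => x.1 * x.2) ?_ ?_ ?_ ?_ ?_
  · intro d hd
    rw [Finset.mem_inter, mem_uDivisors hn, mem_uDivisors hab0] at hd
    have hd0 : d ≠ 0 := (hd.1.pos hnpos).ne'
    rw [Finset.mem_product, Finset.mem_inter, Finset.mem_inter,
      mem_uDivisors hn, mem_uDivisors hn, mem_uDivisors ha, mem_uDivisors hb]
    have ga : UD (Nat.gcd d a) a := hd.2.gcd_left hab ha hb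
    have hd' : UD d (b * a) := by rw [mul_comm]; exact hd.2
    have gb : UD (Nat.gcd d b) b := hd'.gcd_left hab.symm hb ha
    have gda : UD (Nat.gcd d a) d := UD.gcd_left_self hab hd.2.1 hd0
    have gdb : UD (Nat.gcd d b) d := UD.gcd_left_self hab.symm hd'.1 hd0
    exact ⟨⟨gda.trans hd.1 (ga.pos (Nat.pos_of_ne_zero ha)).ne', ga⟩,
      ⟨gdb.trans hd.1 (gb.pos (Nat.pos_of_ne_zero hb)).ne', gb⟩⟩
  · rintro ⟨d₁, d₂⟩ hx
    rw [Finset.mem_product, Finset.mem_inter, Finset.mem_inter,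
      mem_uDivisors hn, mem_uDivisors hn, mem_uDivisors ha, mem_uDivisors hb] at hx
    rw [Finset.mem_inter, mem_uDivisors hn, mem_uDivisors hab0]
    have hcop : Nat.Coprime d₁ d₂ := coprime_of_dvd hx.1.2.1 hx.2.2.1 hab
    exact ⟨hx.1.1.mul_udvd hx.2.1 hcop hnpos,
      hx.1.2.mul_mul hx.2.2 hab (Nat.pos_of_ne_zero ha) (Nat.pos_of_ne_zero hb)⟩
  · intro d hd
    rw [Finset.mem_inter, mem_uDivisors hn, mem_uDivisors hab0] at hd
    exact gcd_mul_gcd hab hd.2.1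
  · rintro ⟨d₁, d₂⟩ hx
    rw [Finset.mem_product, Finset.mem_inter, Finset.mem_inter,
      mem_uDivisors hn, mem_uDivisors hn, mem_uDivisors ha, mem_uDivisors hb] at hx
    have c2a : Nat.Coprime d₂ a := coprime_of_dvd hx.2.2.1 dvd_rfl hab.symm
    have c1b : Nat.Coprime d₁ b := coprime_of_dvd hx.1.2.1 dvd_rfl hab
    have e1 : Nat.gcd (d₁ * d₂) a = d₁ := by
      rw [Nat.Coprime.gcd_mul_right_cancel d₁ c2a, Nat.gcd_eq_left hx.1.2.1]
    have e2 : Nat.gcd (d₁ * d₂) b = d₂ := by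
      rw [Nat.Coprime.gcd_mul_left_cancel d₂ c1b, Nat.gcd_eq_left hx.2.2.1]
    simp [e1, e2]
  · intro d hd
    rw [Finset.mem_inter, mem_uDivisors hn, mem_uDivisors hab0] at hd
    rw [gcd_mul_gcd hab hd.2.1]

/-- The closure of common unitary divisors under lcm. -/
lemma UD.lcm {d₁ d₂ n : ℕ} (h1 : UD d₁ n) (h2 : UD d₂ n) (hn : 0 < n) :
    UD (Nat.lcm d₁ d₂) n := by
  have hdvd : Nat.lcm d₁ d₂ ∣ n := Nat.lcm_dvd h1.1 h2.1
  have hd1 : 0 < d₁ := Nat.pos_of_dvd_of_pos h1.1 hn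
  have hd2 : 0 < d₂ := Nat.pos_of_dvd_of_pos h2.1 hn
  have hl : 0 < Nat.lcm d₁ d₂ := Nat.pos_of_dvd_of_pos hdvd hn
  refine ⟨hdvd, ?_⟩
  by_contra hne
  obtain ⟨p, hp, hpd⟩ := Nat.exists_prime_and_dvd hne
  have hpl : p ∣ Nat.lcm d₁ d₂ := hpd.trans (Nat.gcd_dvd_left _ _)
  have hpr : p ∣ n / Nat.lcm d₁ d₂ := hpd.trans (Nat.gcd_dvd_right _ _)
  have key : ∀ d : ℕ, 0 < d → UD d n → d ∣ Nat.lcm d₁ d₂ → p ∣ d → False := by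
    intro d hdpos hud hdl hpd'
    have hq : n / Nat.lcm d₁ d₂ ∣ n / d := by
      refine ⟨Nat.lcm d₁ d₂ / d, ?_⟩
      rw [Nat.div_mul_div_comm hdvd hdl, mul_comm n, Nat.mul_div_mul_left _ _ hl]
    have hpn : p ∣ n / d := hpr.trans hq
    have : p ∣ 1 := hud.2 ▸ Nat.dvd_gcd hpd' hpn
    exact hp.one_lt.ne' (Nat.eq_one_of_dvd_one this)
  rcases (Nat.Prime.dvd_mul hp).mp (hpl.trans (Nat.lcm_dvd_mul d₁ d₂)) with h | h
  · exact key d₁ hd1 h1 (Nat.dvd_lcm_left _ _) h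
  · exact key d₂ hd2 h2 (Nat.dvd_lcm_right _ _) h

lemma gcud_mem {n q : ℕ} (hn : n ≠ 0) (hq : q ≠ 0) :
    gcud n q ∈ uDivisors n ∩ uDivisors q := by
  have h1 : (1 : ℕ) ∈ uDivisors n ∩ uDivisors q := by
    rw [Finset.mem_inter, mem_uDivisors hn, mem_uDivisors hq]
    exact ⟨UD.one n, UD.one q⟩
  obtain ⟨b, hb, he⟩ := Finset.exists_mem_eq_sup _ ⟨1, h1⟩ (id : ℕ → ℕ)
  rw [gcud, he]
  exact hb

lemma uDivisors_gcud {n q : ℕ} (hn : n ≠ 0) (hq : q ≠ 0) :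
    uDivisors (gcud n q) = uDivisors n ∩ uDivisors q := by
  have hg := gcud_mem hn hq
  rw [Finset.mem_inter, mem_uDivisors hn, mem_uDivisors hq] at hg
  have hg0 : gcud n q ≠ 0 := (hg.1.pos (Nat.pos_of_ne_zero hn)).ne'
  ext d
  rw [mem_uDivisors hg0, Finset.mem_inter, mem_uDivisors hn, mem_uDivisors hq]
  constructor
  · intro h
    have hd0 : d ≠ 0 := (h.pos (Nat.pos_of_ne_zero hg0)).ne'
    exact ⟨h.trans hg.1 hd0, h.trans hg.2 hd0⟩
  · rintro ⟨h1, h2⟩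
    have hd0 : 0 < d := h1.pos (Nat.pos_of_ne_zero hn)
    have hl1 : UD (Nat.lcm d (gcud n q)) n := h1.lcm hg.1 (Nat.pos_of_ne_zero hn)
    have hl2 : UD (Nat.lcm d (gcud n q)) q := h2.lcm hg.2 (Nat.pos_of_ne_zero hq)
    have hmem : Nat.lcm d (gcud n q) ∈ uDivisors n ∩ uDivisors q := by
      rw [Finset.mem_inter, mem_uDivisors hn, mem_uDivisors hq]; exact ⟨hl1, hl2⟩
    have hle : Nat.lcm d (gcud n q) ≤ gcud n q := Finset.le_sup (f := id) hmem
    have hge : gcud n q ∣ Nat.lcm d (gcud n q) := Nat.dvd_lcm_right _ _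
    have heq : Nat.lcm d (gcud n q) = gcud n q :=
      Nat.le_antisymm hle (Nat.le_of_dvd (hl1.pos (Nat.pos_of_ne_zero hn)) hge)
    have hdg : d ∣ gcud n q := heq ▸ Nat.dvd_lcm_left _ _
    refine ⟨hdg, ?_⟩
    obtain ⟨c, hc⟩ := hdg
    obtain ⟨m, hm⟩ := hg.1.1
    have hnd : n / d = c * m := by
      rw [hm, hc, show d * c * m = d * (c * m) by ring, Nat.mul_div_cancel_left _ hd0]
    have : Nat.Coprime d (c * m) := hnd ▸ h1.2
    rw [hc, Nat.mul_div_cancel_left _ hd0]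
    exact this.coprime_dvd_right (dvd_mul_right c m)

lemma uDivisors_one : uDivisors 1 = {1} := by decide

lemma uDivisors_prime_pow {p a : ℕ} (hp : p.Prime) (ha : a ≠ 0) :
    uDivisors (p ^ a) = {1, p ^ a} := by
  have hpa : p ^ a ≠ 0 := pow_ne_zero a hp.pos.ne'
  ext d
  rw [mem_uDivisors hpa, Finset.mem_insert, Finset.mem_singleton]
  constructor
  · rintro ⟨hdvd, hcop⟩
    obtain ⟨i, hi, rfl⟩ := (Nat.dvd_prime_pow hp).mp hdvd
    rcases Nat.eq_zero_or_pos i with rfl | hipos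
    · exact Or.inl (by simp)
    rcases Nat.lt_or_ge i a with hlt | hge
    · exfalso
      rw [Nat.pow_div hi hp.pos] at hcop
      have h1 : p ∣ p ^ i := dvd_pow_self p hipos.ne'
      have h2 : p ∣ p ^ (a - i) := dvd_pow_self p (Nat.sub_ne_zero_of_lt hlt)
      have := Nat.dvd_gcd h1 h2
      rw [hcop] at this
      exact hp.one_lt.ne' (Nat.eq_one_of_dvd_one this)
    · exact Or.inr (by rw [Nat.le_antisymm hi hge])
  · rintro (rfl | rfl)
    · exact UD.one _
    · exact UD.refl hpa

lemma mustar_one : mustar 1 = 1 := by simp [mustar]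

lemma mustar_prime_pow {p a : ℕ} (hp : p.Prime) (ha : a ≠ 0) : mustar (p ^ a) = -1 := by
  simp [mustar, Nat.primeFactors_pow p ha, hp.primeFactors]

lemma mustar_mul {a b : ℕ} (ha : a ≠ 0) (hb : b ≠ 0) (hab : Nat.Coprime a b) :
    mustar (a * b) = mustar a * mustar b := by
  rw [mustar, mustar, mustar, Nat.primeFactors_mul ha hb,
    Finset.card_union_of_disjoint hab.disjoint_primeFactors, pow_add]

lemma jordanTwo_mul {a b : ℕ} (ha : a ≠ 0) (hb : b ≠ 0) (hab : Nat.Coprime a b) :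
    jordanTwo (a * b) = jordanTwo a * jordanTwo b := by
  rw [jordanTwo, jordanTwo, jordanTwo, Nat.primeFactors_mul ha hb,
    Finset.prod_union hab.disjoint_primeFactors]
  push_cast
  ring

lemma jordanTwo_one : jordanTwo 1 = 1 := by simp [jordanTwo]

lemma jordanTwo_prime_pow {p a : ℕ} (hp : p.Prime) (ha : a ≠ 0) :
    jordanTwo (p ^ a) = (p : ℂ) ^ (2 * a) * (1 - 1 / (p : ℂ) ^ 2) := by
  rw [jordanTwo, Nat.primeFactors_pow p ha, hp.primeFactors]
  push_cast
  rw [Finset.prod_singleton, ← pow_mul, mul_comm a 2]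

lemma ctilde_one {n : ℕ} (hn : n ≠ 0) : ctilde 1 n = 1 := by
  rw [ctilde, uDivisors_gcud hn one_ne_zero, uDivisors_one,
    Finset.inter_eq_right.mpr (by
      intro d hd
      rw [Finset.mem_singleton] at hd
      subst hd
      exact (mem_uDivisors hn).mpr (UD.one n))]
  simp [mustar_one]

lemma ctilde_mul {n a b : ℕ} (hn : n ≠ 0) (ha : a ≠ 0) (hb : b ≠ 0) (hab : Nat.Coprime a b) :
    ctilde (a * b) n = ctilde a n * ctilde b n := by
  have hab0 : a * b ≠ 0 := mul_ne_zero ha hb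
  rw [ctilde, uDivisors_gcud hn hab0, key_sum hn ha hb hab,
    ctilde, uDivisors_gcud hn ha, ctilde, uDivisors_gcud hn hb, Finset.sum_mul_sum,
    Finset.sum_product]
  refine Finset.sum_congr rfl fun d₁ h1 => Finset.sum_congr rfl fun d₂ h2 => ?_
  rw [Finset.mem_inter, mem_uDivisors hn, mem_uDivisors ha] at h1
  rw [Finset.mem_inter, mem_uDivisors hn, mem_uDivisors hb] at h2
  have e : a * b / (d₁ * d₂) = (a / d₁) * (b / d₂) := (Nat.div_mul_div_comm h1.2.1 h2.2.1).symm
  have ha' : a / d₁ ≠ 0 := (Nat.div_pos (Nat.le_of_dvd (Nat.pos_of_ne_zero ha) h1.2.1)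
    (h1.2.pos (Nat.pos_of_ne_zero ha))).ne'
  have hb' : b / d₂ ≠ 0 := (Nat.div_pos (Nat.le_of_dvd (Nat.pos_of_ne_zero hb) h2.2.1)
    (h2.2.pos (Nat.pos_of_ne_zero hb))).ne'
  rw [e, mustar_mul ha' hb' (coprime_of_dvd (Nat.div_dvd_of_dvd h1.2.1)
    (Nat.div_dvd_of_dvd h2.2.1) hab)]
  push_cast
  ring

/-- membership of `p ^ a` in the unitary divisors of `n`. -/
lemma prime_pow_ud_iff {p a n : ℕ} (hp : p.Prime) (ha : a ≠ 0) (hn : n ≠ 0) :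
    UD (p ^ a) n ↔ n.factorization p = a := by
  constructor
  · rintro ⟨hdvd, hcop⟩
    have hle : a ≤ n.factorization p := (Nat.Prime.pow_dvd_iff_le_factorization hp hn).mp hdvd
    have hnd : ¬ p ∣ n / p ^ a := by
      intro hpd
      have : p ∣ 1 := hcop ▸ Nat.dvd_gcd (dvd_pow_self p ha) hpd
      exact hp.one_lt.ne' (Nat.eq_one_of_dvd_one this)
    have : ¬ p ^ (a + 1) ∣ n := by
      intro hdvd'
      exact hnd ((Nat.dvd_div_iff_mul_dvd hdvd).mpr (by rwa [← pow_succ]))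
    have hlt : ¬ (a + 1 ≤ n.factorization p) := fun hc =>
      this ((Nat.Prime.pow_dvd_iff_le_factorization hp hn).mpr hc)
    omega
  · intro he
    have hdvd : p ^ a ∣ n := (Nat.Prime.pow_dvd_iff_le_factorization hp hn).mpr he.ge
    refine ⟨hdvd, ?_⟩
    have hnd : ¬ p ∣ n / p ^ a := by
      intro hpd
      have : p ^ (a + 1) ∣ n := by
        rw [pow_succ]
        exact (Nat.dvd_div_iff_mul_dvd hdvd).mp hpd
      have := (Nat.Prime.pow_dvd_iff_le_factorization hp hn).mp this
      omega
    exact Nat.Coprime.pow_left a ((Nat.Prime.coprime_iff_not_dvd hp).mpr hnd)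

lemma ctilde_prime_pow {p a n : ℕ} (hp : p.Prime) (ha : a ≠ 0) (hn : n ≠ 0) :
    ctilde (p ^ a) n = if n.factorization p = a then (p : ℤ) ^ a - 1 else -1 := by
  have hpa : p ^ a ≠ 0 := pow_ne_zero a hp.pos.ne'
  have h1pa : (1 : ℕ) ≠ p ^ a := by
    have := hp.one_lt
    have := Nat.one_lt_pow ha hp.one_lt
    omega
  rw [ctilde, uDivisors_gcud hn hpa, uDivisors_prime_pow hp ha]
  by_cases h : n.factorization p = a
  · have hmem : p ^ a ∈ uDivisors n := (mem_uDivisors hn).mpr ((prime_pow_ud_iff hp ha hn).mpr h)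
    have : uDivisors n ∩ {1, p ^ a} = {1, p ^ a} := by
      refine Finset.inter_eq_right.mpr ?_
      intro d hd
      rw [Finset.mem_insert, Finset.mem_singleton] at hd
      rcases hd with rfl | rfl
      · exact (mem_uDivisors hn).mpr (UD.one n)
      · exact hmem
    rw [this, if_pos h, Finset.sum_insert (by simpa using h1pa), Finset.sum_singleton,
      Nat.div_one, Nat.div_self (Nat.pos_of_ne_zero hpa), mustar_one, mustar_prime_pow hp ha]
    push_cast
    ring
  · have hmem : p ^ a ∉ uDivisors n := fun hc =>
      h ((prime_pow_ud_iff hp ha hn).mp ((mem_uDivisors hn).mp hc))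
    have : uDivisors n ∩ {1, p ^ a} = {1} := by
      ext d
      simp only [Finset.mem_inter, Finset.mem_insert, Finset.mem_singleton]
      constructor
      · rintro ⟨hd, rfl | rfl⟩
        · rfl
        · exact absurd hd hmem
      · rintro rfl
        exact ⟨(mem_uDivisors hn).mpr (UD.one n), Or.inl rfl⟩
    rw [this, if_neg h, Finset.sum_singleton, Nat.div_one, mustar_prime_pow hp ha]
    ring

lemma sigmaStar_mul {a b : ℕ} (ha : a ≠ 0) (hb : b ≠ 0) (hab : Nat.Coprime a b) :
    sigmaStar (a * b) = sigmaStar a * sigmaStar b := by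
  have hab0 : a * b ≠ 0 := mul_ne_zero ha hb
  have hsub : ∀ {x y : ℕ}, x ≠ 0 → y ≠ 0 → Nat.Coprime x y →
      uDivisors (x * y) ∩ uDivisors x = uDivisors x := by
    intro x y hx hy hxy
    refine Finset.inter_eq_right.mpr ?_
    intro d hd
    rw [mem_uDivisors hx] at hd
    rw [mem_uDivisors (mul_ne_zero hx hy)]
    exact hd.trans (UD.mul_left hx hxy) (hd.pos (Nat.pos_of_ne_zero hx)).ne'
  have h1 : uDivisors (a * b) ∩ uDivisors a = uDivisors a := hsub ha hb hab
  have h2 : uDivisors (a * b) ∩ uDivisors b = uDivisors b := by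
    rw [mul_comm] at hab0 ⊢
    exact hsub hb ha hab.symm
  rw [sigmaStar, ← Finset.inter_self (uDivisors (a * b)), key_sum hab0 ha hb hab, h1, h2,
    sigmaStar, sigmaStar, Finset.sum_mul_sum, Finset.sum_product]

lemma sigmaStar_prime_pow {p a : ℕ} (hp : p.Prime) (ha : a ≠ 0) :
    sigmaStar (p ^ a) = 1 + p ^ a := by
  have h1pa : (1 : ℕ) ≠ p ^ a := (Nat.one_lt_pow ha hp.one_lt).ne
  rw [sigmaStar, uDivisors_prime_pow hp ha, Finset.sum_insert (by simpa using h1pa),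
    Finset.sum_singleton]

lemma sigmaStar_zero : sigmaStar 0 = 0 := by simp [sigmaStar, uDivisors]

lemma sigmaStar_eq_prod {n : ℕ} (hn : n ≠ 0) :
    (sigmaStar n : ℂ) = ∏ p ∈ n.primeFactors, (1 + (p : ℂ) ^ (n.factorization p)) := by
  classical
  let F : ArithmeticFunction ℂ :=
    ⟨fun m => (sigmaStar m : ℂ), by simp [sigmaStar_zero]⟩
  have hF : F.IsMultiplicative := by
    constructor
    · show ((sigmaStar 1 : ℕ) : ℂ) = 1
      rw [sigmaStar, uDivisors_one]
      simp
    · intro m k hmk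
      show ((sigmaStar (m * k) : ℕ) : ℂ) = ((sigmaStar m : ℕ) : ℂ) * ((sigmaStar k : ℕ) : ℂ)
      rcases eq_or_ne m 0 with rfl | hm
      · have hk1 : k = 1 := by simpa [Nat.coprime_zero_left] using hmk
        subst hk1
        simp [sigmaStar_zero]
      rcases eq_or_ne k 0 with rfl | hk
      · have hm1 : m = 1 := by simpa [Nat.coprime_zero_right] using hmk
        subst hm1
        simp [sigmaStar_zero]
      rw [sigmaStar_mul hm hk hmk]
      push_cast
      ring
  have hfact := hF.multiplicative_factorization F hn
  have : (sigmaStar n : ℂ) = n.factorization.prod fun p k => ((sigmaStar (p ^ k) : ℕ) : ℂ) :=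
    hfact
  rw [this, Finsupp.prod, Nat.support_factorization]
  refine Finset.prod_congr rfl fun p hp => ?_
  have hp' : p.Prime := Nat.prime_of_mem_primeFactors hp
  have he : n.factorization p ≠ 0 := by
    rwa [← Finsupp.mem_support_iff, Nat.support_factorization]
  rw [sigmaStar_prime_pow hp' he]
  push_cast
  ring

lemma cast_eq_prod {n : ℕ} (hn : n ≠ 0) :
    (n : ℂ) = ∏ p ∈ n.primeFactors, (p : ℂ) ^ (n.factorization p) := by
  conv_lhs => rw [← Nat.factorization_prod_pow_eq_self hn]
  rw [Finsupp.prod, Nat.support_factorization]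
  push_cast
  rfl

lemma sigmaStar_div_eq_prod {n : ℕ} (hn : n ≠ 0) :
    (sigmaStar n : ℂ) / (n : ℂ) =
      ∏ p ∈ n.primeFactors, (1 + 1 / (p : ℂ) ^ (n.factorization p)) := by
  rw [sigmaStar_eq_prod hn, cast_eq_prod hn, ← Finset.prod_div_distrib]
  refine Finset.prod_congr rfl fun p hp => ?_
  have hp0 : ((p : ℂ)) ^ (n.factorization p) ≠ 0 :=
    pow_ne_zero _ (Nat.cast_ne_zero.mpr (Nat.prime_of_mem_primeFactors hp).pos.ne')
  field_simp
  ring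

/-- the series terms -/
noncomputable def f (n : ℕ) (q : ℕ) : ℂ := jordanTwo q * (ctilde q n : ℂ) / (q : ℂ) ^ 4

lemma f_zero (n : ℕ) : f n 0 = 0 := by simp [f, jordanTwo]

lemma f_one {n : ℕ} (hn : n ≠ 0) : f n 1 = 1 := by
  simp [f, jordanTwo_one, ctilde_one hn]

lemma f_mul {n : ℕ} (hn : n ≠ 0) {a b : ℕ} (hab : Nat.Coprime a b) :
    f n (a * b) = f n a * f n b := by
  rcases eq_or_ne a 0 with rfl | ha
  · have hb1 : b = 1 := by simpa [Nat.coprime_zero_left] using hab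
    subst hb1
    simp [f_zero, f_one hn]
  rcases eq_or_ne b 0 with rfl | hb
  · have ha1 : a = 1 := by simpa [Nat.coprime_zero_right] using hab
    subst ha1
    simp [f_zero, f_one hn]
  rw [f, f, f, jordanTwo_mul ha hb hab, ctilde_mul hn ha hb hab]
  push_cast
  ring

lemma abs_ctilde_le {n : ℕ} (hn : n ≠ 0) (q : ℕ) : |ctilde q n| ≤ (n : ℤ) ^ 2 := by
  rw [sq]
  have hnn : (0 : ℤ) ≤ (n : ℤ) * n := by positivity
  rcases eq_or_ne q 0 with rfl | hq
  · have h0 : uDivisors 0 = ∅ := by simp [uDivisors]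
    have : gcud n 0 = 0 := by rw [gcud, h0, Finset.inter_empty, Finset.sup_empty]; rfl
    rw [ctilde, this, h0]
    simpa using hnn
  rw [ctilde, uDivisors_gcud hn hq]
  set S := uDivisors n ∩ uDivisors q with hS
  have h1 : |∑ d ∈ S, (d : ℤ) * mustar (q / d)| ≤ ∑ d ∈ S, |(d : ℤ) * mustar (q / d)| :=
    Finset.abs_sum_le_sum_abs _ _
  have h2 : ∀ d ∈ S, |(d : ℤ) * mustar (q / d)| = (d : ℤ) := by
    intro d hd
    rw [abs_mul, mustar, abs_pow, abs_neg, abs_one, one_pow, mul_one, abs_of_nonneg]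
    positivity
  rw [Finset.sum_congr rfl h2] at h1
  refine h1.trans ?_
  have hsub : S ⊆ n.divisors := by
    intro d hd
    rw [hS, Finset.mem_inter] at hd
    have := hd.1
    rw [uDivisors, Finset.mem_filter] at this
    exact this.1
  have h3 : ∑ d ∈ S, (d : ℤ) ≤ ∑ d ∈ n.divisors, (d : ℤ) :=
    Finset.sum_le_sum_of_subset_of_nonneg hsub (by intro i _ _; positivity)
  refine h3.trans ?_
  have h4 : ∀ d ∈ n.divisors, (d : ℤ) ≤ (n : ℤ) := by
    intro d hd
    exact_mod_cast Nat.le_of_dvd (Nat.pos_of_ne_zero hn) (Nat.mem_divisors.mp hd).1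
  have h5 : ∑ d ∈ n.divisors, (d : ℤ) ≤ n.divisors.card • (n : ℤ) :=
    Finset.sum_le_card_nsmul _ _ _ h4
  refine h5.trans ?_
  rw [nsmul_eq_mul]
  have hcard : (n.divisors.card : ℤ) ≤ (n : ℤ) := by
    have : n.divisors.card ≤ n := by
      have h6 : n.divisors.card ≤ (Finset.Ico 1 (n + 1)).card := by
        apply Finset.card_le_card
        intro d hd
        have := Nat.mem_divisors.mp hd
        rw [Finset.mem_Ico]
        exact ⟨Nat.pos_of_dvd_of_pos this.1 (Nat.pos_of_ne_zero hn),
          Nat.lt_succ_of_le (Nat.le_of_dvd (Nat.pos_of_ne_zero hn) this.1)⟩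
      simpa using h6
    exact_mod_cast this
  exact mul_le_mul_of_nonneg_right hcard (by positivity)

lemma norm_jordanTwo_le (q : ℕ) : ‖jordanTwo q‖ ≤ (q : ℝ) ^ 2 := by
  rw [jordanTwo, norm_mul, norm_pow, Complex.norm_natCast]
  have h1 : ‖∏ p ∈ q.primeFactors, (1 - 1 / (p : ℂ) ^ 2)‖ ≤ 1 := by
    rw [norm_prod]
    refine Finset.prod_le_one (fun p _ => norm_nonneg _) fun p hp => ?_
    have hp' : p.Prime := Nat.prime_of_mem_primeFactors hp
    have hcast : (1 - 1 / (p : ℂ) ^ 2) = ((1 - 1 / (p : ℝ) ^ 2 : ℝ) : ℂ) := by push_cast; ring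
    rw [hcast, Complex.norm_real, Real.norm_eq_abs]
    have hple : (1 : ℝ) ≤ (p : ℝ) ^ 2 := by
      have : (1 : ℝ) ≤ (p : ℝ) := by exact_mod_cast hp'.one_lt.le
      nlinarith
    rw [abs_of_nonneg (by rw [sub_nonneg]; rw [div_le_one (by linarith)]; linarith)]
    have : 0 ≤ 1 / (p : ℝ) ^ 2 := by positivity
    linarith
  calc (q : ℝ) ^ 2 * ‖∏ p ∈ q.primeFactors, (1 - 1 / (p : ℂ) ^ 2)‖
      ≤ (q : ℝ) ^ 2 * 1 := mul_le_mul_of_nonneg_left h1 (by positivity)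
    _ = (q : ℝ) ^ 2 := mul_one _

lemma norm_f_le {n : ℕ} (hn : n ≠ 0) (q : ℕ) :
    ‖f n q‖ ≤ (n : ℝ) ^ 2 * ((q : ℝ) ^ 2)⁻¹ := by
  rcases eq_or_ne q 0 with rfl | hq
  · rw [f_zero, norm_zero]
    positivity
  have hq0 : (0 : ℝ) < (q : ℝ) := by exact_mod_cast Nat.pos_of_ne_zero hq
  have hc : ‖((ctilde q n : ℤ) : ℂ)‖ ≤ (n : ℝ) ^ 2 := by
    rw [Complex.norm_intCast, ← Int.cast_abs]
    exact_mod_cast abs_ctilde_le hn q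
  have h1 : ‖f n q‖ ≤ (q : ℝ) ^ 2 * (n : ℝ) ^ 2 / (q : ℝ) ^ 4 := by
    rw [f, norm_div, norm_mul, norm_pow, Complex.norm_natCast]
    gcongr
    exact norm_jordanTwo_le q
  refine h1.trans (le_of_eq ?_)
  field_simp

lemma summable_norm_f {n : ℕ} (hn : n ≠ 0) : Summable (fun q => ‖f n q‖) := by
  have hs : Summable (fun q : ℕ => (n : ℝ) ^ 2 * ((q : ℝ) ^ 2)⁻¹) := by
    have := (Real.summable_one_div_nat_pow (p := 2)).mpr one_lt_two
    simpa only [one_div] using this.mul_left ((n : ℝ) ^ 2)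
  exact Summable.of_nonneg_of_le (fun q => norm_nonneg _) (fun q => norm_f_le hn q) hs

lemma local_sum {n : ℕ} (hn : n ≠ 0) (p : Nat.Primes) :
    ∑' e : ℕ, f n ((p : ℕ) ^ e) =
      (1 - 1 / (p : ℂ) ^ 2) *
        (1 + if (p : ℕ) ∈ n.primeFactors then 1 / (p : ℂ) ^ (n.factorization (p : ℕ)) else 0) := by
  classical
  obtain ⟨P, hp⟩ := p
  simp only [Subtype.coe_mk]
  obtain ⟨e, he⟩ : ∃ e', e' = n.factorization P := ⟨_, rfl⟩
  rw [← he]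
  have hP1 : (1 : ℝ) < (P : ℝ) := by exact_mod_cast hp.one_lt
  have hPC : (P : ℂ) ≠ 0 := Nat.cast_ne_zero.mpr hp.pos.ne'
  set u : ℂ := 1 / (P : ℂ) ^ 2 with hu
  have hunorm : ‖u‖ < 1 := by
    rw [hu, norm_div, norm_one, norm_pow, Complex.norm_natCast, div_lt_one (by nlinarith)]
    nlinarith
  have hu1 : (1 : ℂ) - u ≠ 0 := by
    intro h
    have : u = 1 := by linear_combination -h
    rw [this] at hunorm
    simp at hunorm
  have hsum : Summable (fun a : ℕ => f n (P ^ a)) := by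
    have hinj : Function.Injective (fun a : ℕ => P ^ a) :=
      fun a b hab => Nat.pow_right_injective hp.two_le hab
    exact ((summable_norm_f hn).of_norm).comp_injective hinj
  rw [Summable.tsum_eq_zero_add hsum, pow_zero, f_one hn]
  have key : ∀ a : ℕ, (P : ℂ) ^ (2 * a) / ((P : ℂ) ^ a) ^ 4 = u ^ a := by
    intro a
    have hne : (P : ℂ) ^ (2 * a) ≠ 0 := pow_ne_zero _ hPC
    rw [hu, div_pow, one_pow, ← pow_mul, ← pow_mul, one_div,
      show a * 4 = 2 * a + 2 * a by ring, pow_add, div_mul_eq_div_div, div_self hne, one_div]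
  have hform : ∀ (a : ℕ) (c : ℂ),
      (P : ℂ) ^ (2 * (a + 1)) * (1 - u) * c / ((P : ℂ) ^ (a + 1)) ^ 4
        = (1 - u) * c * u ^ (a + 1) := by
    intro a c
    rw [← key (a + 1)]
    ring
  have huP : u * (P : ℂ) = 1 / (P : ℂ) := by
    rw [hu]
    field_simp
  have hterm : ∀ a : ℕ, f n (P ^ (a + 1)) =
      ((1 - u) * (-u)) * u ^ a + (if a + 1 = e then (1 - u) * (1 / (P : ℂ) ^ e) else 0) := by
    intro a
    have ha : a + 1 ≠ 0 := Nat.succ_ne_zero a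
    rw [f, jordanTwo_prime_pow hp ha, ctilde_prime_pow hp ha hn, ← he]
    by_cases h : e = a + 1
    · rw [if_pos h, if_pos h.symm]
      push_cast
      rw [← hu, hform a ((P : ℂ) ^ (a + 1) - 1), h]
      have hPp : u ^ (a + 1) * (P : ℂ) ^ (a + 1) = 1 / (P : ℂ) ^ (a + 1) := by
        rw [← mul_pow, huP, div_pow, one_pow]
      linear_combination (1 - u) * hPp
    · rw [if_neg h, if_neg (fun hc => h hc.symm)]
      push_cast
      rw [← hu, hform a (-1)]
      ring
  have hsum1 : Summable (fun a : ℕ => ((1 - u) * (-u)) * u ^ a) :=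
    (summable_geometric_of_norm_lt_one hunorm).mul_left _
  have hsum2 : Summable (fun a : ℕ => (if a + 1 = e then (1 - u) * (1 / (P : ℂ) ^ e) else 0)) := by
    apply summable_of_ne_finset_zero (s := {e - 1})
    intro a ha
    rw [Finset.mem_singleton] at ha
    rw [if_neg (by omega)]
  rw [tsum_congr hterm, Summable.tsum_add hsum1 hsum2, tsum_mul_left,
    tsum_geometric_of_norm_lt_one hunorm]
  have hspike : ∑' a : ℕ, (if a + 1 = e then (1 - u) * (1 / (P : ℂ) ^ e) else 0)
      = if P ∈ n.primeFactors then (1 - u) * (1 / (P : ℂ) ^ e) else 0 := by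
    have hmem : P ∈ n.primeFactors ↔ e ≠ 0 := by
      rw [he, ← Nat.support_factorization, Finsupp.mem_support_iff]
    rcases eq_or_ne e 0 with h0 | h0
    · rw [if_neg (by rw [hmem]; omega)]
      rw [show (fun a : ℕ => (if a + 1 = e then (1 - u) * (1 / (P : ℂ) ^ e) else 0)) = fun _ => 0
        from funext fun a => if_neg (by omega)]
      exact tsum_zero
    · rw [if_pos (hmem.mpr h0)]
      obtain ⟨m, rfl⟩ : ∃ m, e = m + 1 := ⟨e - 1, by omega⟩
      rw [show (fun a : ℕ => (if a + 1 = m + 1 then (1 - u) * (1 / (P : ℂ) ^ (m + 1)) else 0))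
          = fun a : ℕ => (if a = m then (1 - u) * (1 / (P : ℂ) ^ (m + 1)) else 0)
        from funext fun a => by simp only [add_left_inj]]
      exact tsum_ite_eq m _
  rw [hspike]
  rcases eq_or_ne e 0 with h0 | h0
  · have hmem : P ∉ n.primeFactors := by
      rw [← Nat.support_factorization, Finsupp.mem_support_iff, ← he]
      omega
    rw [if_neg hmem, if_neg hmem]
    field_simp
    ring
  · have hmem : P ∈ n.primeFactors := by
      rw [← Nat.support_factorization, Finsupp.mem_support_iff, ← he]
      omega
    rw [if_pos hmem, if_pos hmem]
    field_simp
    ring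

lemma main_identity {n : ℕ} (hn : n ≠ 0) :
    (sigmaStar n : ℂ) / (n : ℂ) = riemannZeta 2 * ∑' q : ℕ, f n q := by
  classical
  have hsum := summable_norm_f hn
  have hprod : HasProd (fun p : Nat.Primes => ∑' e : ℕ, f n ((p : ℕ) ^ e)) (∑' q : ℕ, f n q) :=
    EulerProduct.eulerProduct_hasProd (f_one hn) (fun hab => f_mul hn hab) hsum (f_zero n)
  have hzeta : HasProd (fun p : Nat.Primes => (1 - (p : ℂ) ^ (-2 : ℂ))⁻¹) (riemannZeta 2) :=
    riemannZeta_eulerProduct_hasProd (by norm_num)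
  have hcpow : ∀ p : Nat.Primes, ((p : ℕ) : ℂ) ^ (-2 : ℂ) = 1 / ((p : ℕ) : ℂ) ^ 2 := by
    intro p
    rw [show ((-2 : ℂ)) = ((-2 : ℤ) : ℂ) by norm_num, Complex.cpow_intCast]
    rw [show ((-2 : ℤ)) = -((2 : ℕ) : ℤ) by norm_num, zpow_neg, zpow_natCast, one_div]
  have hzeta' : HasProd (fun p : Nat.Primes => (1 - 1 / (p : ℂ) ^ 2)⁻¹) (riemannZeta 2) := by
    simpa only [hcpow] using hzeta
  have hmul2 := hzeta'.mul hprod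
  have hne : ∀ p : Nat.Primes, (1 - 1 / (p : ℂ) ^ 2) ≠ 0 := by
    intro p
    have hp2 : (2 : ℝ) ≤ ((p : ℕ) : ℝ) := by exact_mod_cast p.2.two_le
    have : ‖1 / ((p : ℕ) : ℂ) ^ 2‖ < 1 := by
      rw [norm_div, norm_one, norm_pow, Complex.norm_natCast, div_lt_one (by nlinarith)]
      nlinarith
    intro h
    have h1 : (1 : ℂ) = 1 / ((p : ℕ) : ℂ) ^ 2 := by linear_combination h
    rw [← h1] at this
    simp at this
  have hloc : ∀ p : Nat.Primes, (1 - 1 / (p : ℂ) ^ 2)⁻¹ * (∑' e : ℕ, f n ((p : ℕ) ^ e))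
      = 1 + (if (p : ℕ) ∈ n.primeFactors then 1 / (p : ℂ) ^ (n.factorization (p : ℕ)) else 0) := by
    intro p
    rw [local_sum hn p, ← mul_assoc, inv_mul_cancel₀ (hne p), one_mul]
  simp only [hloc] at hmul2
  -- finite product
  let emb : {x // x ∈ n.primeFactors} ↪ Nat.Primes :=
    ⟨fun x => ⟨x.1, Nat.prime_of_mem_primeFactors x.2⟩,
      fun x y h => Subtype.ext (Subtype.mk_eq_mk.mp h)⟩
  let s : Finset Nat.Primes := n.primeFactors.attach.map emb
  have hg1 : ∀ p : Nat.Primes, p ∉ s →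
      (1 + (if (p : ℕ) ∈ n.primeFactors then 1 / (p : ℂ) ^ (n.factorization (p : ℕ)) else 0))
        = 1 := by
    intro p hp
    rw [if_neg, add_zero]
    intro hmem
    exact hp (Finset.mem_map.mpr ⟨⟨(p : ℕ), hmem⟩, Finset.mem_attach _ _, Subtype.ext rfl⟩)
  have h3 : HasProd
      (fun p : Nat.Primes =>
        1 + (if (p : ℕ) ∈ n.primeFactors then 1 / (p : ℂ) ^ (n.factorization (p : ℕ)) else 0))
      (∏ p ∈ s,
        (1 + (if (p : ℕ) ∈ n.primeFactors then 1 / (p : ℂ) ^ (n.factorization (p : ℕ)) else 0))) :=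
    hasProd_prod_of_ne_finset_one hg1
  have hval := hmul2.unique h3
  rw [sigmaStar_div_eq_prod hn, hval, Finset.prod_map]
  symm
  refine (Finset.prod_congr rfl fun x _ => ?_).trans (Finset.prod_attach _ _)
  have hx : (↑(emb x) : ℕ) ∈ n.primeFactors := x.2
  rw [if_pos hx]
  rfl

end SigmaStarAux

theorem sigmaStar_expansion (n : ℕ) (hn : 0 < n) :
    Summable (fun q : ℕ =>
      ‖jordanTwo (q + 1) * (ctilde (q + 1) n : ℂ) / ((q : ℂ) + 1) ^ 4‖) ∧
      (sigmaStar n : ℂ) / (n : ℂ) =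
        riemannZeta 2 *
          ∑' q : ℕ, jordanTwo (q + 1) * (ctilde (q + 1) n : ℂ) / ((q : ℂ) + 1) ^ 4 := by
  have hn' : n ≠ 0 := hn.ne'
  have hfun : ∀ q : ℕ, jordanTwo (q + 1) * (ctilde (q + 1) n : ℂ) / ((q : ℂ) + 1) ^ 4
      = SigmaStarAux.f n (q + 1) := by
    intro q
    simp only [SigmaStarAux.f]
    norm_num
  have hs : Summable (fun q : ℕ => ‖SigmaStarAux.f n (q + 1)‖) :=
    (SigmaStarAux.summable_norm_f hn').comp_injective (add_left_injective 1)
  constructor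
  · simpa only [hfun] using hs
  · have h1 : ∑' q : ℕ, jordanTwo (q + 1) * (ctilde (q + 1) n : ℂ) / ((q : ℂ) + 1) ^ 4
        = ∑' q : ℕ, SigmaStarAux.f n (q + 1) := by
      exact tsum_congr hfun
    have h2 : ∑' q : ℕ, SigmaStarAux.f n q
        = SigmaStarAux.f n 0 + ∑' q : ℕ, SigmaStarAux.f n (q + 1) :=
      Summable.tsum_eq_zero_add (SigmaStarAux.summable_norm_f hn').of_norm
    rw [h1, SigmaStarAux.main_identity hn', h2, SigmaStarAux.f_zero, zero_add]
end

section
/- For real t > 1 and a positive integer Q, Σ_{m ≥ 1, gcd(m,Q)=1} μ*(m)/m^t = ζ(t) Π_p (1 − 2/p^t) Π_{p ∣ Q} (1 − 1/p^t)(1 − 2/p^t)^{-1}, where the first product is over all primes and the second over primes dividing Q. -/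
open Complex EulerProduct

lemma mustar_one : mustar 1 = 1 := by simp [mustar]

lemma mustar_mul {m n : ℕ} (h : Nat.Coprime m n) :
    mustar (m * n) = mustar m * mustar n := by
  rcases eq_or_ne m 0 with rfl | hm
  · obtain rfl : n = 1 := Nat.coprime_zero_left n |>.mp h
    simp [mustar]
  rcases eq_or_ne n 0 with rfl | hn
  · obtain rfl : m = 1 := Nat.coprime_zero_right m |>.mp h
    simp [mustar]
  · unfold mustar
    rw [Nat.primeFactors_mul hm hn,
      Finset.card_union_of_disjoint (Nat.Coprime.disjoint_primeFactors h), pow_add]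

lemma mustar_prime_pow {p e : ℕ} (hp : p.Prime) (he : e ≠ 0) : mustar (p ^ e) = -1 := by
  unfold mustar
  rw [Nat.primeFactors_pow _ he, Nat.Prime.primeFactors hp]
  simp

lemma norm_mustar (n : ℕ) : ‖(mustar n : ℂ)‖ = 1 := by
  unfold mustar
  push_cast
  rw [norm_pow]
  simp

lemma prime_cpow_neg_eq {p : ℕ} (hp : 0 < p) (t : ℝ) :
    (p : ℂ) ^ (-(t : ℂ)) = (((p : ℝ) ^ (-t) : ℝ) : ℂ) := by
  rw [show ((p : ℂ)) = ((p : ℝ) : ℂ) by norm_cast,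
    show (-(t : ℂ)) = ((-t : ℝ) : ℂ) by norm_cast,
    ← Complex.ofReal_cpow (by positivity)]

lemma prime_rpow_lt_half {p : ℕ} (hp : 2 ≤ p) {t : ℝ} (ht : 1 < t) :
    (p : ℝ) ^ (-t) < 1/2 := by
  have h2 : (2 : ℝ) < 2 ^ t := by
    nth_rewrite 1 [← Real.rpow_one 2]
    exact Real.rpow_lt_rpow_of_exponent_lt one_lt_two ht
  have h3 : (2 : ℝ) ^ t ≤ (p : ℝ) ^ t :=
    Real.rpow_le_rpow (by norm_num) (by exact_mod_cast hp) (by linarith)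
  have hpos : (0 : ℝ) < (p : ℝ) ^ t := by positivity
  rw [Real.rpow_neg (by positivity)]
  rw [inv_lt_iff_one_lt_mul₀ hpos]
  nlinarith

lemma mustar_euler (t : ℝ) (ht : 1 < t) (Q : ℕ) :
    HasProd (fun p : Nat.Primes => if (p : ℕ) ∣ Q then 1 else
        (1 - 2 * (p : ℂ) ^ (-(t : ℂ))) * (1 - (p : ℂ) ^ (-(t : ℂ)))⁻¹)
      (∑' n : ℕ, if Nat.Coprime n Q then (mustar n : ℂ) * (n : ℂ) ^ (-(t : ℂ)) else 0) := by
  have hs : 1 < (t : ℂ).re := by simpa using ht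
  have hsne : (t : ℂ) ≠ 0 := ne_zero_of_one_lt_re hs
  set Z := riemannZetaSummandHom hsne with hZ
  have hZn : ∀ n : ℕ, Z n = (n : ℂ) ^ (-(t : ℂ)) := fun n => rfl
  set f : ℕ → ℂ := fun n => if Nat.Coprime n Q then (mustar n : ℂ) * Z n else 0 with hf
  have hf₁ : f 1 = 1 := by simp [hf, Nat.coprime_one_left, mustar_one]
  have hf₀ : f 0 = 0 := by simp [hf]
  have hmul : ∀ {m n : ℕ}, Nat.Coprime m n → f (m * n) = f m * f n := by
    intro m n h
    have key : Nat.Coprime (m*n) Q ↔ (Nat.Coprime m Q ∧ Nat.Coprime n Q) :=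
      Nat.coprime_mul_iff_left
    simp only [hf]
    by_cases hm : Nat.Coprime m Q
    · by_cases hn : Nat.Coprime n Q
      · rw [if_pos (key.mpr ⟨hm, hn⟩), if_pos hm, if_pos hn, mustar_mul h, map_mul]
        push_cast
        ring
      · rw [if_neg (fun hc => hn (key.mp hc).2), if_neg hn, mul_zero]
    · rw [if_neg (fun hc => hm (key.mp hc).1), if_neg hm, zero_mul]
  have hsum : Summable (fun n => ‖f n‖) := by
    apply Summable.of_nonneg_of_le (fun n => norm_nonneg _) (fun n => ?_)
      (summable_riemannZetaSummand hs)
    simp only [hf]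
    split_ifs with h
    · rw [norm_mul, norm_mustar, one_mul]
    · rw [norm_zero]
      exact norm_nonneg _
  have H := eulerProduct_hasProd hf₁ hmul hsum hf₀
  have hfun : (fun p : Nat.Primes => if (p : ℕ) ∣ Q then 1 else
      (1 - 2 * (p : ℂ) ^ (-(t : ℂ))) * (1 - (p : ℂ) ^ (-(t : ℂ)))⁻¹) =
      fun p : Nat.Primes => ∑' e : ℕ, f ((p : ℕ) ^ e) := by
    funext p
    have hp : (p : ℕ).Prime := p.prop
    by_cases hd : (p : ℕ) ∣ Q
    · rw [if_pos hd]
      symm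
      rw [tsum_eq_single 0 ?_]
      · simpa using hf₁
      · intro e he
        have : ¬ Nat.Coprime ((p : ℕ) ^ e) Q := by
          intro hc
          exact (Nat.Prime.coprime_iff_not_dvd hp).mp
            ((Nat.coprime_pow_left_iff (Nat.pos_of_ne_zero he) _ _).mp hc) hd
        simp [hf, this]
    · rw [if_neg hd]
      have hpQ : Nat.Coprime (p : ℕ) Q := (Nat.Prime.coprime_iff_not_dvd hp).mpr hd
      set x : ℂ := (p : ℂ) ^ (-(t : ℂ)) with hx
      have hxr : x = (((p : ℝ) ^ (-t) : ℝ) : ℂ) := prime_cpow_neg_eq hp.pos t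
      have hxnorm : ‖x‖ < 1 := by
        rw [hxr, Complex.norm_real, Real.norm_eq_abs, abs_of_pos (Real.rpow_pos_of_pos (by exact_mod_cast hp.pos) _)]
        have := prime_rpow_lt_half hp.two_le ht
        linarith
      have hterm : ∀ e : ℕ, f ((p : ℕ) ^ e) = (mustar ((p : ℕ) ^ e) : ℂ) * x ^ e := by
        intro e
        rw [hf]
        simp only [if_pos (Nat.Coprime.pow_left e hpQ)]
        congr 1
        rw [map_pow]
        rfl
      have hsummable : Summable (fun e : ℕ => (mustar ((p : ℕ) ^ e) : ℂ) * x ^ e) := by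
        apply Summable.of_norm_bounded (summable_geometric_of_lt_one (norm_nonneg x) hxnorm)
        intro e
        rw [norm_mul, norm_mustar, one_mul, norm_pow]
      symm
      calc ∑' e : ℕ, f ((p : ℕ) ^ e) = ∑' e : ℕ, (mustar ((p : ℕ) ^ e) : ℂ) * x ^ e :=
            tsum_congr hterm
        _ = (mustar ((p:ℕ) ^ 0) : ℂ) * x ^ 0
              + ∑' e : ℕ, (mustar ((p : ℕ) ^ (e+1)) : ℂ) * x ^ (e+1) :=
            Summable.tsum_eq_zero_add hsummable
        _ = 1 + ∑' e : ℕ, (-x) * x ^ e := by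
            have h0 : (mustar ((p : ℕ) ^ 0) : ℂ) * x ^ 0 = 1 := by
              rw [pow_zero, pow_zero, mustar_one]
              norm_num
            rw [h0]
            congr 1
            exact tsum_congr fun e => by
              rw [mustar_prime_pow hp e.succ_ne_zero, pow_succ]
              push_cast
              ring
        _ = 1 + (-x) * (1 - x)⁻¹ := by
            rw [tsum_mul_left, tsum_geometric_of_norm_lt_one hxnorm]
        _ = (1 - 2 * x) * (1 - x)⁻¹ := by
            have h1 : (1 : ℂ) - x ≠ 0 := by
              intro h
              rw [sub_eq_zero] at h
              rw [← h] at hxnorm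
              simp at hxnorm
            field_simp
            ring
  rw [hfun]
  exact H

theorem mustar_coprime_series (t : ℝ) (ht : 1 < t) (Q : ℕ) (hQ : 0 < Q) :
    ∑' m : {m : ℕ // 0 < m ∧ Nat.Coprime m Q}, (mustar (m : ℕ) : ℂ) / ((m : ℕ) : ℂ) ^ (t : ℂ) =
      riemannZeta (t : ℂ) * (∏' p : Nat.Primes, (1 - 2 / ((p : ℕ) : ℂ) ^ (t : ℂ))) *
        ∏ p ∈ Q.primeFactors, (1 - 1 / (p : ℂ) ^ (t : ℂ)) * (1 - 2 / (p : ℂ) ^ (t : ℂ))⁻¹ := by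
  have hs : 1 < (t : ℂ).re := by simpa using ht
  have hsne : (t : ℂ) ≠ 0 := ne_zero_of_one_lt_re hs
  set x : Nat.Primes → ℂ := fun p => ((p : ℕ) : ℂ) ^ (-(t : ℂ)) with hxdef
  set B : Nat.Primes → ℂ := fun p => 1 - 2 * x p with hBdef
  set A : Nat.Primes → ℂ := fun p => (1 - x p)⁻¹ with hAdef
  set L : Nat.Primes → ℂ := fun p => B p * A p with hLdef
  -- basic facts
  have hxr : ∀ p : Nat.Primes, x p = ((((p : ℕ) : ℝ) ^ (-t) : ℝ) : ℂ) :=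
    fun p => prime_cpow_neg_eq p.prop.pos t
  have hrpos : ∀ p : Nat.Primes, (0 : ℝ) < ((p : ℕ) : ℝ) ^ (-t) :=
    fun p => Real.rpow_pos_of_pos (by exact_mod_cast p.prop.pos) _
  have hrlt : ∀ p : Nat.Primes, ((p : ℕ) : ℝ) ^ (-t) < 1/2 :=
    fun p => prime_rpow_lt_half p.prop.two_le ht
  have hBne : ∀ p : Nat.Primes, B p ≠ 0 := by
    intro p
    have : B p = (((1 - 2 * (((p : ℕ) : ℝ) ^ (-t)) : ℝ)) : ℂ) := by
      rw [hBdef]; simp only []; rw [hxr p]; push_cast; ring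
    rw [this]
    rw [Ne, Complex.ofReal_eq_zero]
    have := hrlt p
    intro h
    linarith
  have h1ne : ∀ p : Nat.Primes, (1 : ℂ) - x p ≠ 0 := by
    intro p
    have : (1 : ℂ) - x p = (((1 - (((p : ℕ) : ℝ) ^ (-t)) : ℝ)) : ℂ) := by
      rw [hxr p]; push_cast; ring
    rw [this, Ne, Complex.ofReal_eq_zero]
    have h1 := hrlt p
    intro h
    linarith
  have hLne : ∀ p : Nat.Primes, L p ≠ 0 :=
    fun p => mul_ne_zero (hBne p) (inv_ne_zero (h1ne p))
  -- Euler products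
  have hζ : HasProd A (riemannZeta (t : ℂ)) := riemannZeta_eulerProduct_hasProd hs
  have hL1 := mustar_euler t ht 1
  have hL1eq : (fun p : Nat.Primes => if (p : ℕ) ∣ 1 then 1 else
      (1 - 2 * (p : ℂ) ^ (-(t : ℂ))) * (1 - (p : ℂ) ^ (-(t : ℂ)))⁻¹) = L := by
    funext p
    rw [if_neg (fun hd => p.prop.one_lt.ne' (Nat.dvd_one.mp hd))]
  rw [hL1eq] at hL1
  have hLm : Multipliable L := hL1.multipliable
  have hSQ := mustar_euler t ht Q
  -- multipliability of B
  have hxsum : Summable x := by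
    apply Summable.of_norm
    have h0 : Summable (fun n : ℕ => ‖riemannZetaSummandHom hsne n‖) :=
      summable_riemannZetaSummand hs
    exact h0.comp_injective Nat.Primes.coe_nat_injective
  have hBm : Multipliable B := by
    have := Complex.multipliable_of_summable_log (f := B) ?_
    · exact this
    · exact Summable.clog_one_sub (hxsum.mul_left 2)
  have hAm : Multipliable A := hζ.multipliable
  -- the finite set of primes dividing Q, as a Finset of Nat.Primes
  let emb : {q // q ∈ Q.primeFactors} ↪ Nat.Primes :=
    ⟨fun q => ⟨q.1, Nat.prime_of_mem_primeFactors q.2⟩,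
     fun a b hab => Subtype.ext (Subtype.mk_eq_mk.mp hab)⟩
  set S₀ : Finset Nat.Primes := Q.primeFactors.attach.map emb with hS₀def
  have hmemS₀ : ∀ p : Nat.Primes, p ∈ S₀ ↔ (p : ℕ) ∣ Q := by
    intro p
    constructor
    · intro hp
      obtain ⟨q, _, hq2⟩ := Finset.mem_map.mp hp
      have : (q : ℕ) = (p : ℕ) := congrArg Subtype.val hq2
      rw [← this]
      exact Nat.dvd_of_mem_primeFactors q.2
    · intro hd
      refine Finset.mem_map.mpr ⟨⟨(p : ℕ), Nat.mem_primeFactors.mpr ⟨p.prop, hd, hQ.ne'⟩⟩,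
        Finset.mem_attach _ _, ?_⟩
      exact Subtype.ext rfl
  set D : Nat.Primes → ℂ := fun p => if (p : ℕ) ∣ Q then (L p)⁻¹ else 1 with hDdef
  have hDm : HasProd D (∏ p ∈ S₀, (L p)⁻¹) := by
    have h1 : ∀ p ∉ S₀, D p = 1 := fun p hp => if_neg (fun hd => hp ((hmemS₀ p).mpr hd))
    have h2 := hasProd_prod_of_ne_finset_one (L := SummationFilter.unconditional _) h1
    have h3 : ∏ p ∈ S₀, D p = ∏ p ∈ S₀, (L p)⁻¹ :=
      Finset.prod_congr rfl fun p hp => if_pos ((hmemS₀ p).mp hp)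
    rwa [h3] at h2
  have hSL : (fun p : Nat.Primes => if (p : ℕ) ∣ Q then 1 else
      (1 - 2 * (p : ℂ) ^ (-(t : ℂ))) * (1 - (p : ℂ) ^ (-(t : ℂ)))⁻¹) =
      fun p => L p * D p := by
    funext p
    by_cases hd : (p : ℕ) ∣ Q
    · rw [if_pos hd, hDdef]
      simp only [if_pos hd]
      rw [mul_inv_cancel₀ (hLne p)]
    · rw [if_neg hd, hDdef]
      simp only [if_neg hd]
      rw [mul_one]
  rw [hSL] at hSQ
  -- combine
  have hLD : HasProd (fun p => L p * D p) ((∏' p, L p) * ∏ p ∈ S₀, (L p)⁻¹) :=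
    hLm.hasProd.mul hDm
  have hkey : (∑' n : ℕ, if Nat.Coprime n Q then (mustar n : ℂ) * (n : ℂ) ^ (-(t : ℂ)) else 0)
      = (∏' p, L p) * ∏ p ∈ S₀, (L p)⁻¹ := hSQ.unique hLD
  -- finite product identification
  have hfin : (∏ p ∈ Q.primeFactors, (1 - 1 / (p : ℂ) ^ (t : ℂ)) *
      (1 - 2 / (p : ℂ) ^ (t : ℂ))⁻¹) = ∏ p ∈ S₀, (L p)⁻¹ := by
    rw [hS₀def, Finset.prod_map]
    rw [← Finset.prod_attach Q.primeFactors
      (fun q => (1 - 1 / (q : ℂ) ^ (t : ℂ)) * (1 - 2 / (q : ℂ) ^ (t : ℂ))⁻¹)]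
    refine Finset.prod_congr rfl fun q _ => ?_
    show (1 - 1 / ((q : ℕ) : ℂ) ^ (t : ℂ)) * (1 - 2 / ((q : ℕ) : ℂ) ^ (t : ℂ))⁻¹ = (L (emb q))⁻¹
    rw [hLdef]
    simp only [hBdef, hAdef]
    rw [mul_inv, inv_inv]
    have hx' : x (emb q) = ((q : ℕ) : ℂ) ^ (-(t : ℂ)) := rfl
    rw [hx', Complex.cpow_neg]
    rw [one_div, div_eq_mul_inv]
    ring
  -- zeta * tprod B = tprod L
  have hBeq : (fun p : Nat.Primes => 1 - 2 / ((p : ℕ) : ℂ) ^ (t : ℂ)) = B := by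
    funext p
    rw [hBdef]
    simp only [hxdef]
    rw [Complex.cpow_neg, div_eq_mul_inv]
  have hζB : riemannZeta (t : ℂ) * (∏' p : Nat.Primes, (1 - 2 / ((p : ℕ) : ℂ) ^ (t : ℂ)))
      = ∏' p, L p := by
    rw [hBeq, ← hζ.tprod_eq, ← Multipliable.tprod_mul hAm hBm]
    exact tprod_congr fun p => by rw [hLdef]; ring
  -- LHS identification
  have hLHS : (∑' m : {m : ℕ // 0 < m ∧ Nat.Coprime m Q},
      (mustar (m : ℕ) : ℂ) / ((m : ℕ) : ℂ) ^ (t : ℂ))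
      = ∑' n : ℕ, if Nat.Coprime n Q then (mustar n : ℂ) * (n : ℂ) ^ (-(t : ℂ)) else 0 := by
    rw [← tsum_subtype_eq_of_support_subset (s := {m : ℕ | 0 < m ∧ Nat.Coprime m Q}) ?_]
    · exact tsum_congr fun m => by
        rw [if_pos m.prop.2, Complex.cpow_neg, div_eq_mul_inv]
    · intro n hn
      simp only [Function.mem_support, ne_eq] at hn
      by_cases hc : Nat.Coprime n Q
      · refine ⟨?_, hc⟩
        rcases Nat.eq_zero_or_pos n with rfl | h
        · exfalso
          apply hn
          rw [if_pos hc]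
          rw [Nat.cast_zero, Complex.zero_cpow (neg_ne_zero.mpr hsne), mul_zero]
        · exact h
      · exact absurd (if_neg hc) hn
  rw [hLHS, hkey, ← hζB, hfin]
end
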